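/- arXiv:2108.00025 — 4 statements merged into one kernel-verified Lean document; each statement's English description precedes it below -/
import Mathlib

section
/- Let A and A' be unital C*-algebras, P₁ a nontrivial symmetric projection in A, P₂ = I_A − P₁, A_{jk} = P_j A P_k, and suppose A satisfies (♠): for j ∈ {1,2}, P_j A X = {0} implies X = 0. Fix an integer n ≥ 2 and let φ: A → A' be a bijective map with φ(I_A) = I_{A'} satisfying (•): φ(p_{n*}(A,B,Ξ,…,Ξ)) = p_{n*}(φ(A),φ(B),φ(Ξ),…,φ(Ξ)) for all A, B ∈ A and Ξ ∈ {P₁, P₂, I_A}. Then for j ≠ k in {1,2} and any A_{jk}, B_{jk} ∈ A_{jk} one has φ(A_{jk} + B_{jk}) = φ(A_{jk}) + φ(B_{jk}). -/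
/-- The `*`-Lie product `[x,y]_* = xy - y x*`. -/
def starLie {R : Type*} [Ring R] [StarRing R] (x y : R) : R := x * y - y * star x

/-- `pn n a b xi = p_{n*}(a, b, xi, ..., xi)` (with `n - 2` trailing copies of `xi`). -/
def pn {R : Type*} [Ring R] [StarRing R] (n : ℕ) (a b ξ : R) : R :=
  (fun z => starLie z ξ)^[n - 2] (starLie a b)

section Helpers
variable {R : Type*} [Ring R] [StarRing R]

private lemma starLie_add_right (a x y : R) :
    starLie a (x + y) = starLie a x + starLie a y := by
  simp only [starLie, mul_add, add_mul, star_add]; abel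

private lemma starLie_add_left (x y b : R) :
    starLie (x + y) b = starLie x b + starLie y b := by
  simp only [starLie, mul_add, add_mul, star_add]; abel

private lemma starLie_zero_left (b : R) : starLie 0 b = 0 := by
  simp [starLie]

private lemma starLie_zero_right (a : R) : starLie a 0 = 0 := by
  simp [starLie]

private lemma iter_starLie_add (c : R) (m : ℕ) (x y : R) :
    (fun z => starLie z c)^[m] (x + y)
      = (fun z => starLie z c)^[m] x + (fun z => starLie z c)^[m] y := by
  induction m generalizing x y with
  | zero => simp
  | succ k ih =>
      rw [Function.iterate_succ_apply, Function.iterate_succ_apply,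
        Function.iterate_succ_apply]
      simp only [starLie_add_left]
      exact ih _ _

private lemma iter_starLie_zero (c : R) (m : ℕ) :
    (fun z => starLie z c)^[m] (0 : R) = 0 := by
  induction m with
  | zero => simp
  | succ k ih => rw [Function.iterate_succ_apply, show starLie (0:R) c = 0 from starLie_zero_left c, ih]

private lemma pn_add_right (n : ℕ) (a x y ξ : R) :
    pn n a (x + y) ξ = pn n a x ξ + pn n a y ξ := by
  unfold pn; rw [starLie_add_right, iter_starLie_add]

private lemma pn_add_left (n : ℕ) (x y b ξ : R) :
    pn n (x + y) b ξ = pn n x b ξ + pn n y b ξ := by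
  unfold pn; rw [starLie_add_left, iter_starLie_add]

private lemma pn_zero_right (n : ℕ) (a ξ : R) : pn n a 0 ξ = 0 := by
  unfold pn; rw [starLie_zero_right, iter_starLie_zero]

private lemma pn_zero_left (n : ℕ) (b ξ : R) : pn n 0 b ξ = 0 := by
  unfold pn; rw [starLie_zero_left, iter_starLie_zero]

private lemma pn_sub_right (n : ℕ) (a x y ξ : R) :
    pn n a (x - y) ξ = pn n a x ξ - pn n a y ξ := by
  have h := pn_add_right n a (x - y) y ξ
  rw [sub_add_cancel] at h
  rw [h]; abel

private lemma pn_sub_left (n : ℕ) (x y b ξ : R) :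
    pn n (x - y) b ξ = pn n x b ξ - pn n y b ξ := by
  have h := pn_add_left n (x - y) y b ξ
  rw [sub_add_cancel] at h
  rw [h]; abel

private lemma pn_one_one (n : ℕ) : pn n (1 : R) 1 1 = 0 := by
  unfold pn
  have : starLie (1 : R) 1 = 0 := by simp [starLie]
  rw [this, iter_starLie_zero]

private lemma pn_eq_two (n : ℕ) (h : n - 2 = 0) (a b ξ : R) :
    pn n a b ξ = starLie a b := by
  unfold pn; rw [h]; rfl

private lemma pn_eq_succ (n m : ℕ) (h : n - 2 = m + 1) (a b ξ : R) :
    pn n a b ξ = (fun z => starLie z ξ)^[m] (starLie (starLie a b) ξ) := by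
  unfold pn; rw [h, Function.iterate_succ_apply]

private lemma pn_kill (n m : ℕ) (h : n - 2 = m + 1) (a b ξ : R)
    (h0 : starLie (starLie a b) ξ = 0) : pn n a b ξ = 0 := by
  rw [pn_eq_succ n m h, h0, iter_starLie_zero]

private lemma starLie_neg_right (a x : R) : starLie a (-x) = -(starLie a x) := by
  simp only [starLie, mul_neg, neg_mul, star_neg]; abel

private lemma iter_starLie_fixed (c w : R) (h : starLie w c = w) (m : ℕ) :
    (fun z => starLie z c)^[m] w = w := by
  induction m with
  | zero => simp
  | succ k ih => rw [Function.iterate_succ_apply, show starLie w c = w from h, ih]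

private lemma pn_fix (n m : ℕ) (h : n - 2 = m + 1) (a b ξ w : R)
    (h1 : starLie (starLie a b) ξ = w) (h2 : starLie w ξ = w) :
    pn n a b ξ = w := by
  rw [pn_eq_succ n m h, h1, iter_starLie_fixed _ _ h2]

end Helpers

private theorem master {A A' : Type*} [Ring A] [StarRing A]
    [Module ℂ A] [SMulCommClass ℂ A A] [IsScalarTower ℂ A A] [StarModule ℂ A]
    [Ring A'] [StarRing A']
    (e : A) (he : e * e = e) (hse : star e = e)
    (f : A) (hf : f = 1 - e)
    (spe : ∀ X : A, (∀ Y : A, e * Y * X = 0) → X = 0)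
    (spf : ∀ X : A, (∀ Y : A, f * Y * X = 0) → X = 0)
    (n : ℕ) (hn : 2 ≤ n)
    (φ : A → A') (hinj : Function.Injective φ) (hsurj : Function.Surjective φ)
    (hunit : φ 1 = 1)
    (hbe : ∀ a b : A, φ (pn n a b e) = pn n (φ a) (φ b) (φ e))
    (hbf : ∀ a b : A, φ (pn n a b f) = pn n (φ a) (φ b) (φ f))
    (hb1 : ∀ a b : A, φ (pn n a b 1) = pn n (φ a) (φ b) (φ 1))
    (N M : A) (hN : e * N * f = N) (hM : e * M * f = M) :
    φ (N + M) = φ N + φ M := by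
  -- basic projection facts
  have hff : f * f = f := by rw [hf, sub_mul, one_mul, mul_sub, mul_one, he]; abel
  have hef : e * f = 0 := by rw [hf, mul_sub, mul_one, he, sub_self]
  have hfe : f * e = 0 := by rw [hf, sub_mul, one_mul, he, sub_self]
  have hsf : star f = f := by rw [hf]; simp [star_sub, hse]
  have hef1 : e + f = 1 := by rw [hf]; abel
  have he' : ∀ w : A, e * (e * w) = e * w := fun w => by rw [← mul_assoc, he]
  have hff' : ∀ w : A, f * (f * w) = f * w := fun w => by rw [← mul_assoc, hff]
  have hef' : ∀ w : A, e * (f * w) = 0 := fun w => by rw [← mul_assoc, hef, zero_mul]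
  have hfe' : ∀ w : A, f * (e * w) = 0 := fun w => by rw [← mul_assoc, hfe, zero_mul]
  have decomp : ∀ W : A, W = e*(W*e) + e*(W*f) + f*(W*e) + f*(W*f) := by
    intro W
    conv_lhs => rw [show W = (e+f) * W * (e+f) by rw [hef1]; simp]
    simp only [add_mul, mul_add, mul_assoc]
    abel
  have hphi0 : φ 0 = 0 := by
    have h := hb1 1 1
    rw [pn_one_one, hunit, pn_one_one] at h
    exact h
  -- canonicalize N and M
  obtain ⟨x, rfl⟩ : ∃ x, N = e*(x*f) := ⟨N, by rw [← mul_assoc, hN]⟩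
  obtain ⟨y, rfl⟩ : ∃ y, M = e*(y*f) := ⟨M, by rw [← mul_assoc, hM]⟩
  clear hN hM
  -- master equations
  have ME : ∀ (ξ : A), (∀ a b : A, φ (pn n a b ξ) = pn n (φ a) (φ b) (φ ξ)) →
      ∀ (W X Y : A), φ W = φ X + φ Y → ∀ a : A,
        φ (pn n a W ξ) = φ (pn n a X ξ) + φ (pn n a Y ξ) := by
    intro ξ hbξ W X Y hW a
    rw [hbξ, hW, pn_add_right, ← hbξ, ← hbξ]
  have ME' : ∀ (ξ : A), (∀ a b : A, φ (pn n a b ξ) = pn n (φ a) (φ b) (φ ξ)) →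
      ∀ (W X Y : A), φ W = φ X + φ Y → ∀ b : A,
        φ (pn n W b ξ) = φ (pn n X b ξ) + φ (pn n Y b ξ) := by
    intro ξ hbξ W X Y hW b
    rw [hbξ, hW, pn_add_left, ← hbξ, ← hbξ]
  have toZero : ∀ z : A, φ z = 0 → z = 0 := fun z hz => hinj (by rw [hz, hphi0])
  rcases Nat.lt_or_ge n 3 with h3 | h3
  · -- case n = 2
    have hm0 : n - 2 = 0 := by omega
    have p2 : ∀ a b ξ : A, pn n a b ξ = starLie a b := fun a b ξ => pn_eq_two n hm0 a b ξ
    have p2' : ∀ a b ξ : A', pn n a b ξ = starLie a b := fun a b ξ => pn_eq_two n hm0 a b ξ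
    have hb2 : ∀ a b : A, φ (starLie a b) = starLie (φ a) (φ b) := by
      intro a b
      have h := hb1 a b
      rwa [p2, p2'] at h
    have ME2 : ∀ (W X Y : A), φ W = φ X + φ Y → ∀ a : A,
        φ (starLie a W) = φ (starLie a X) + φ (starLie a Y) := by
      intro W X Y hW a
      have h := ME 1 hb1 W X Y hW a
      rwa [p2, p2, p2] at h
    have ME2' : ∀ (W X Y : A), φ W = φ X + φ Y → ∀ b : A,
        φ (starLie W b) = φ (starLie X b) + φ (starLie Y b) := by
      intro W X Y hW b
      have h := ME' 1 hb1 W X Y hW b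
      rwa [p2, p2, p2] at h
    -- the element u = i (e - f)
    set u : A := (Complex.I : ℂ) • (e - f) with hu
    have hsu : star u = -u := by
      rw [hu, star_smul, star_sub, hse, hsf]
      simp [Complex.star_def, Complex.conj_I, neg_smul]
    have uX : ∀ X : A, starLie u X = Complex.I • ((e - f) * X + X * (e - f)) := by
      intro X
      rw [starLie, hsu, mul_neg, sub_neg_eq_add, hu, smul_mul_assoc, mul_smul_comm, smul_add]
    have uEF : ∀ v : A, starLie u (e*(v*f)) = 0 := by
      intro v
      rw [uX]
      have h1 : (e - f) * (e*(v*f)) = e*(v*f) := by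
        simp [starLie, mul_add, add_mul, mul_sub, sub_mul, neg_mul, mul_neg, neg_neg, neg_zero, star_add, star_sub, star_mul, star_star, star_one, star_zero, one_mul, mul_one, mul_zero, zero_mul, sub_zero, zero_sub, add_zero, zero_add, mul_assoc, he, hff, hef, hfe, hse, hsf, he', hff', hef', hfe']
      have h2 : (e*(v*f)) * (e - f) = -(e*(v*f)) := by
        simp [starLie, mul_add, add_mul, mul_sub, sub_mul, neg_mul, mul_neg, neg_neg, neg_zero, star_add, star_sub, star_mul, star_star, star_one, star_zero, one_mul, mul_one, mul_zero, zero_mul, sub_zero, zero_sub, add_zero, zero_add, mul_assoc, he, hff, hef, hfe, hse, hsf, he', hff', hef', hfe']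
      rw [h1, h2, add_neg_cancel, smul_zero]
    have uFE : ∀ v : A, starLie u (f*(v*e)) = 0 := by
      intro v
      rw [uX]
      have h1 : (e - f) * (f*(v*e)) = -(f*(v*e)) := by
        simp [starLie, mul_add, add_mul, mul_sub, sub_mul, neg_mul, mul_neg, neg_neg, neg_zero, star_add, star_sub, star_mul, star_star, star_one, star_zero, one_mul, mul_one, mul_zero, zero_mul, sub_zero, zero_sub, add_zero, zero_add, mul_assoc, he, hff, hef, hfe, hse, hsf, he', hff', hef', hfe']
      have h2 : (f*(v*e)) * (e - f) = f*(v*e) := by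
        simp [starLie, mul_add, add_mul, mul_sub, sub_mul, neg_mul, mul_neg, neg_neg, neg_zero, star_add, star_sub, star_mul, star_star, star_one, star_zero, one_mul, mul_one, mul_zero, zero_mul, sub_zero, zero_sub, add_zero, zero_add, mul_assoc, he, hff, hef, hfe, hse, hsf, he', hff', hef', hfe']
      rw [h1, h2, neg_add_cancel, smul_zero]
    have uEE : ∀ v : A, starLie u (e*(v*e)) = (2*Complex.I) • (e*(v*e)) := by
      intro v
      rw [uX]
      have h1 : (e - f) * (e*(v*e)) = e*(v*e) := by
        simp [starLie, mul_add, add_mul, mul_sub, sub_mul, neg_mul, mul_neg, neg_neg, neg_zero, star_add, star_sub, star_mul, star_star, star_one, star_zero, one_mul, mul_one, mul_zero, zero_mul, sub_zero, zero_sub, add_zero, zero_add, mul_assoc, he, hff, hef, hfe, hse, hsf, he', hff', hef', hfe']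
      have h2 : (e*(v*e)) * (e - f) = e*(v*e) := by
        simp [starLie, mul_add, add_mul, mul_sub, sub_mul, neg_mul, mul_neg, neg_neg, neg_zero, star_add, star_sub, star_mul, star_star, star_one, star_zero, one_mul, mul_one, mul_zero, zero_mul, sub_zero, zero_sub, add_zero, zero_add, mul_assoc, he, hff, hef, hfe, hse, hsf, he', hff', hef', hfe']
      rw [h1, h2, ← two_smul ℂ, smul_smul, mul_comm]
    have uFF : ∀ v : A, starLie u (f*(v*f)) = -((2*Complex.I) • (f*(v*f))) := by
      intro v
      rw [uX]
      have h1 : (e - f) * (f*(v*f)) = -(f*(v*f)) := by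
        simp [starLie, mul_add, add_mul, mul_sub, sub_mul, neg_mul, mul_neg, neg_neg, neg_zero, star_add, star_sub, star_mul, star_star, star_one, star_zero, one_mul, mul_one, mul_zero, zero_mul, sub_zero, zero_sub, add_zero, zero_add, mul_assoc, he, hff, hef, hfe, hse, hsf, he', hff', hef', hfe']
      have h2 : (f*(v*f)) * (e - f) = -(f*(v*f)) := by
        simp [starLie, mul_add, add_mul, mul_sub, sub_mul, neg_mul, mul_neg, neg_neg, neg_zero, star_add, star_sub, star_mul, star_star, star_one, star_zero, one_mul, mul_one, mul_zero, zero_mul, sub_zero, zero_sub, add_zero, zero_add, mul_assoc, he, hff, hef, hfe, hse, hsf, he', hff', hef', hfe']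
      rw [h1, h2, ← neg_add, ← two_smul ℂ, smul_neg, smul_smul, mul_comm]
    have uWe : ∀ W : A, e * (starLie u W) * e = (2*Complex.I) • (e*(W*e)) := by
      intro W
      rw [uX, mul_smul_comm, smul_mul_assoc]
      have h1 : e * ((e - f) * W + W * (e - f)) * e = e*(W*e) + e*(W*e) := by
        simp [starLie, mul_add, add_mul, mul_sub, sub_mul, neg_mul, mul_neg, neg_neg, neg_zero, star_add, star_sub, star_mul, star_star, star_one, star_zero, one_mul, mul_one, mul_zero, zero_mul, sub_zero, zero_sub, add_zero, zero_add, mul_assoc, he, hff, hef, hfe, hse, hsf, he', hff', hef', hfe']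
      rw [h1, ← two_smul ℂ, smul_smul, mul_comm]
    have uWf : ∀ W : A, f * (starLie u W) * f = -((2*Complex.I) • (f*(W*f))) := by
      intro W
      rw [uX, mul_smul_comm, smul_mul_assoc]
      have h1 : f * ((e - f) * W + W * (e - f)) * f = -(f*(W*f)) + -(f*(W*f)) := by
        simp [starLie, mul_add, add_mul, mul_sub, sub_mul, neg_mul, mul_neg, neg_neg, neg_zero, star_add, star_sub, star_mul, star_star, star_one, star_zero, one_mul, mul_one, mul_zero, zero_mul, sub_zero, zero_sub, add_zero, zero_add, mul_assoc, he, hff, hef, hfe, hse, hsf, he', hff', hef', hfe']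
      rw [h1, ← neg_add, ← two_smul ℂ, smul_neg, smul_smul, mul_comm]
    have csmul : ∀ z w : A, (2*Complex.I) • z = (2*Complex.I) • w → z = w := by
      intro z w h
      have hne : (2*Complex.I : ℂ) ≠ 0 := mul_ne_zero two_ne_zero Complex.I_ne_zero
      rw [← inv_smul_smul₀ hne z, h, inv_smul_smul₀ hne]
    have halfzero : ∀ z : A, z + z = 0 → z = 0 := by
      intro z h
      have h2 : ((2:ℂ)) • z = 0 := by rw [two_smul]; exact h
      have hne : (2:ℂ) ≠ 0 := two_ne_zero
      rw [← inv_smul_smul₀ hne z, h2, smul_zero]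
    -- Claim 2 : (eAf, eAe)
    have claim2 : ∀ X Q : A, e*X*f = X → e*Q*e = Q → φ (X + Q) = φ X + φ Q := by
      intro X Q hX hQ
      obtain ⟨p, rfl⟩ : ∃ p, X = e*(p*f) := ⟨X, by rw [← mul_assoc, hX]⟩
      obtain ⟨q, rfl⟩ : ∃ q, Q = e*(q*e) := ⟨Q, by rw [← mul_assoc, hQ]⟩
      obtain ⟨W, hW⟩ := hsurj (φ (e*(p*f)) + φ (e*(q*e)))
      have c1 : starLie f (e*(p*f)) = -(e*(p*f)) := by simp [starLie, mul_add, add_mul, mul_sub, sub_mul, neg_mul, mul_neg, neg_neg, neg_zero, star_add, star_sub, star_mul, star_star, star_one, star_zero, one_mul, mul_one, mul_zero, zero_mul, sub_zero, zero_sub, add_zero, zero_add, mul_assoc, he, hff, hef, hfe, hse, hsf, he', hff', hef', hfe']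
      have c2 : starLie f (e*(q*e)) = 0 := by simp [starLie, mul_add, add_mul, mul_sub, sub_mul, neg_mul, mul_neg, neg_neg, neg_zero, star_add, star_sub, star_mul, star_star, star_one, star_zero, one_mul, mul_one, mul_zero, zero_mul, sub_zero, zero_sub, add_zero, zero_add, mul_assoc, he, hff, hef, hfe, hse, hsf, he', hff', hef', hfe']
      have hA : starLie f W = -(e*(p*f)) := by
        have h := ME2 W _ _ hW f
        rw [c1, c2, hphi0, add_zero] at h
        exact hinj h
      have hWef : e * (W * f) = e*(p*f) := by
        have h := congrArg (fun t => e * t * f) hA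
        simp only [starLie, mul_add, add_mul, mul_sub, sub_mul, neg_mul, mul_neg, neg_neg, neg_zero, star_add, star_sub, star_mul, star_star, star_one, star_zero, one_mul, mul_one, mul_zero, zero_mul, sub_zero, zero_sub, add_zero, zero_add, mul_assoc, he, hff, hef, hfe, hse, hsf, he', hff', hef', hfe'] at h
        exact neg_injective h
      have hWfe : f * (W * e) = 0 := by
        have h := congrArg (fun t => f * t * e) hA
        simp only [starLie, mul_add, add_mul, mul_sub, sub_mul, neg_mul, mul_neg, neg_neg, neg_zero, star_add, star_sub, star_mul, star_star, star_one, star_zero, one_mul, mul_one, mul_zero, zero_mul, sub_zero, zero_sub, add_zero, zero_add, mul_assoc, he, hff, hef, hfe, hse, hsf, he', hff', hef', hfe'] at h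
        exact h
      have hB : starLie u W = (2*Complex.I) • (e*(q*e)) := by
        have h := ME2 W _ _ hW u
        rw [uEF, uEE, hphi0, zero_add] at h
        exact hinj h
      have hWee : e * (W * e) = e*(q*e) := by
        apply csmul
        have h := congrArg (fun t => e * t * e) hB
        rw [uWe] at h
        rw [h, mul_smul_comm, smul_mul_assoc]
        simp [starLie, mul_add, add_mul, mul_sub, sub_mul, neg_mul, mul_neg, neg_neg, neg_zero, star_add, star_sub, star_mul, star_star, star_one, star_zero, one_mul, mul_one, mul_zero, zero_mul, sub_zero, zero_sub, add_zero, zero_add, mul_assoc, he, hff, hef, hfe, hse, hsf, he', hff', hef', hfe']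
      have hWff : f * (W * f) = 0 := by
        apply csmul
        have h := congrArg (fun t => f * t * f) hB
        rw [uWf] at h
        have h2 : f * (2*Complex.I) • (e*(q*e)) * f = 0 := by
          rw [mul_smul_comm, smul_mul_assoc]
          simp [starLie, mul_add, add_mul, mul_sub, sub_mul, neg_mul, mul_neg, neg_neg, neg_zero, star_add, star_sub, star_mul, star_star, star_one, star_zero, one_mul, mul_one, mul_zero, zero_mul, sub_zero, zero_sub, add_zero, zero_add, mul_assoc, he, hff, hef, hfe, hse, hsf, he', hff', hef', hfe']
        rw [h2] at h
        rw [smul_zero, ← neg_eq_zero]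
        exact h
      have hWeq : W = e*(p*f) + e*(q*e) := by
        conv_lhs => rw [decomp W]
        rw [hWee, hWef, hWfe, hWff]
        abel
      rw [← hWeq]
      exact hW
    -- Claim 3 : (eAf, fAe)
    have claim3 : ∀ X Q : A, e*X*f = X → f*Q*e = Q → φ (X + Q) = φ X + φ Q := by
      intro X Q hX hQ
      obtain ⟨p, rfl⟩ : ∃ p, X = e*(p*f) := ⟨X, by rw [← mul_assoc, hX]⟩
      obtain ⟨q, rfl⟩ : ∃ q, Q = f*(q*e) := ⟨Q, by rw [← mul_assoc, hQ]⟩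
      obtain ⟨W, hW⟩ := hsurj (φ (e*(p*f)) + φ (f*(q*e)))
      have c1 : starLie (e*(p*f)) e = 0 := by simp [starLie, mul_add, add_mul, mul_sub, sub_mul, neg_mul, mul_neg, neg_neg, neg_zero, star_add, star_sub, star_mul, star_star, star_one, star_zero, one_mul, mul_one, mul_zero, zero_mul, sub_zero, zero_sub, add_zero, zero_add, mul_assoc, he, hff, hef, hfe, hse, hsf, he', hff', hef', hfe']
      have c2 : starLie (f*(q*e)) e = f*(q*e) - e*(star q*f) := by simp [starLie, mul_add, add_mul, mul_sub, sub_mul, neg_mul, mul_neg, neg_neg, neg_zero, star_add, star_sub, star_mul, star_star, star_one, star_zero, one_mul, mul_one, mul_zero, zero_mul, sub_zero, zero_sub, add_zero, zero_add, mul_assoc, he, hff, hef, hfe, hse, hsf, he', hff', hef', hfe']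
      have hA : starLie W e = f*(q*e) - e*(star q*f) := by
        have h := ME2' W _ _ hW e
        rw [c1, c2, hphi0, zero_add] at h
        exact hinj h
      have hWfe : f * (W * e) = f*(q*e) := by
        have h := congrArg (fun t => f * t * e) hA
        simp only [starLie, mul_add, add_mul, mul_sub, sub_mul, neg_mul, mul_neg, neg_neg, neg_zero, star_add, star_sub, star_mul, star_star, star_one, star_zero, one_mul, mul_one, mul_zero, zero_mul, sub_zero, zero_sub, add_zero, zero_add, mul_assoc, he, hff, hef, hfe, hse, hsf, he', hff', hef', hfe'] at h
        exact h
      have c3 : starLie (f*(q*e)) f = 0 := by simp [starLie, mul_add, add_mul, mul_sub, sub_mul, neg_mul, mul_neg, neg_neg, neg_zero, star_add, star_sub, star_mul, star_star, star_one, star_zero, one_mul, mul_one, mul_zero, zero_mul, sub_zero, zero_sub, add_zero, zero_add, mul_assoc, he, hff, hef, hfe, hse, hsf, he', hff', hef', hfe']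
      have c4 : starLie (e*(p*f)) f = e*(p*f) - f*(star p*e) := by simp [starLie, mul_add, add_mul, mul_sub, sub_mul, neg_mul, mul_neg, neg_neg, neg_zero, star_add, star_sub, star_mul, star_star, star_one, star_zero, one_mul, mul_one, mul_zero, zero_mul, sub_zero, zero_sub, add_zero, zero_add, mul_assoc, he, hff, hef, hfe, hse, hsf, he', hff', hef', hfe']
      have hB : starLie W f = e*(p*f) - f*(star p*e) := by
        have h := ME2' W _ _ hW f
        rw [c4, c3, hphi0, add_zero] at h
        exact hinj h
      have hWef : e * (W * f) = e*(p*f) := by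
        have h := congrArg (fun t => e * t * f) hB
        simp only [starLie, mul_add, add_mul, mul_sub, sub_mul, neg_mul, mul_neg, neg_neg, neg_zero, star_add, star_sub, star_mul, star_star, star_one, star_zero, one_mul, mul_one, mul_zero, zero_mul, sub_zero, zero_sub, add_zero, zero_add, mul_assoc, he, hff, hef, hfe, hse, hsf, he', hff', hef', hfe'] at h
        exact h
      have hC : starLie u W = 0 := by
        have h := ME2 W _ _ hW u
        rw [uEF, uFE, hphi0, add_zero] at h
        exact toZero _ h
      have hWee : e * (W * e) = 0 := by
        apply csmul
        rw [smul_zero]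
        have h := congrArg (fun t => e * t * e) hC
        rw [uWe] at h
        simpa using h
      have hWff : f * (W * f) = 0 := by
        apply csmul
        rw [smul_zero]
        have h := congrArg (fun t => f * t * f) hC
        rw [uWf] at h
        rw [← neg_eq_zero]
        simpa using h
      have hWeq : W = e*(p*f) + f*(q*e) := by
        conv_lhs => rw [decomp W]
        rw [hWee, hWef, hWfe, hWff]
        abel
      rw [← hWeq]
      exact hW
    -- Claim 7 : (eAf + fAe , fAf)
    have claim7 : ∀ X Q R : A, e*X*f = X → f*Q*e = Q → f*R*f = R →
        φ (X + Q + R) = φ (X + Q) + φ R := by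
      intro X Q R hX hQ hR
      obtain ⟨p, rfl⟩ : ∃ p, X = e*(p*f) := ⟨X, by rw [← mul_assoc, hX]⟩
      obtain ⟨q, rfl⟩ : ∃ q, Q = f*(q*e) := ⟨Q, by rw [← mul_assoc, hQ]⟩
      obtain ⟨r, rfl⟩ : ∃ r, R = f*(r*f) := ⟨R, by rw [← mul_assoc, hR]⟩
      obtain ⟨W, hW⟩ := hsurj (φ (e*(p*f) + f*(q*e)) + φ (f*(r*f)))
      have c1 : starLie e (e*(p*f) + f*(q*e)) = e*(p*f) - f*(q*e) := by
        simp [starLie, mul_add, add_mul, mul_sub, sub_mul, neg_mul, mul_neg, neg_neg, neg_zero, star_add, star_sub, star_mul, star_star, star_one, star_zero, one_mul, mul_one, mul_zero, zero_mul, sub_zero, zero_sub, add_zero, zero_add, mul_assoc, he, hff, hef, hfe, hse, hsf, he', hff', hef', hfe']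
      have c2 : starLie e (f*(r*f)) = 0 := by simp [starLie, mul_add, add_mul, mul_sub, sub_mul, neg_mul, mul_neg, neg_neg, neg_zero, star_add, star_sub, star_mul, star_star, star_one, star_zero, one_mul, mul_one, mul_zero, zero_mul, sub_zero, zero_sub, add_zero, zero_add, mul_assoc, he, hff, hef, hfe, hse, hsf, he', hff', hef', hfe']
      have hA : starLie e W = e*(p*f) - f*(q*e) := by
        have h := ME2 W _ _ hW e
        rw [c1, c2, hphi0, add_zero] at h
        exact hinj h
      have hWef : e * (W * f) = e*(p*f) := by
        have h := congrArg (fun t => e * t * f) hA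
        simp only [starLie, mul_add, add_mul, mul_sub, sub_mul, neg_mul, mul_neg, neg_neg, neg_zero, star_add, star_sub, star_mul, star_star, star_one, star_zero, one_mul, mul_one, mul_zero, zero_mul, sub_zero, zero_sub, add_zero, zero_add, mul_assoc, he, hff, hef, hfe, hse, hsf, he', hff', hef', hfe'] at h
        exact h
      have hWfe : f * (W * e) = f*(q*e) := by
        have h := congrArg (fun t => f * t * e) hA
        simp only [starLie, mul_add, add_mul, mul_sub, sub_mul, neg_mul, mul_neg, neg_neg, neg_zero, star_add, star_sub, star_mul, star_star, star_one, star_zero, one_mul, mul_one, mul_zero, zero_mul, sub_zero, zero_sub, add_zero, zero_add, mul_assoc, he, hff, hef, hfe, hse, hsf, he', hff', hef', hfe'] at h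
        exact neg_injective h
      have c3 : starLie u (e*(p*f) + f*(q*e)) = 0 := by
        rw [starLie_add_right, uEF, uFE, add_zero]
      have hB : starLie u W = -((2*Complex.I) • (f*(r*f))) := by
        have h := ME2 W _ _ hW u
        rw [c3, uFF, hphi0, zero_add] at h
        exact hinj h
      have hWee : e * (W * e) = 0 := by
        apply csmul
        rw [smul_zero]
        have h := congrArg (fun t => e * t * e) hB
        rw [uWe] at h
        rw [h]
        simp [mul_neg, neg_mul, smul_mul_assoc, mul_smul_comm, smul_zero, starLie, mul_add, add_mul, mul_sub, sub_mul, neg_mul, mul_neg, neg_neg, neg_zero, star_add, star_sub, star_mul, star_star, star_one, star_zero, one_mul, mul_one, mul_zero, zero_mul, sub_zero, zero_sub, add_zero, zero_add, mul_assoc, he, hff, hef, hfe, hse, hsf, he', hff', hef', hfe']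
      have hWff : f * (W * f) = f*(r*f) := by
        have h := congrArg (fun t => f * t * f) hB
        rw [uWf] at h
        have h2 : -((2*Complex.I) • (f*(W*f))) = -((2*Complex.I) • (f*(r*f))) := by
          rw [h]
          simp [mul_neg, neg_mul, smul_mul_assoc, mul_smul_comm, mul_assoc, hff', hff]
        exact csmul _ _ (neg_injective h2)
      have hWeq : W = e*(p*f) + f*(q*e) + f*(r*f) := by
        conv_lhs => rw [decomp W]
        rw [hWee, hWef, hWfe, hWff]
        abel
      rw [← hWeq]
      exact hW
    -- Claim 7s : (eAf + fAe , eAe)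
    have claim7s : ∀ X Q R : A, e*X*f = X → f*Q*e = Q → e*R*e = R →
        φ (X + Q + R) = φ (X + Q) + φ R := by
      intro X Q R hX hQ hR
      obtain ⟨p, rfl⟩ : ∃ p, X = e*(p*f) := ⟨X, by rw [← mul_assoc, hX]⟩
      obtain ⟨q, rfl⟩ : ∃ q, Q = f*(q*e) := ⟨Q, by rw [← mul_assoc, hQ]⟩
      obtain ⟨r, rfl⟩ : ∃ r, R = e*(r*e) := ⟨R, by rw [← mul_assoc, hR]⟩
      obtain ⟨W, hW⟩ := hsurj (φ (e*(p*f) + f*(q*e)) + φ (e*(r*e)))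
      have c1 : starLie f (e*(p*f) + f*(q*e)) = f*(q*e) - e*(p*f) := by
        simp [starLie, mul_add, add_mul, mul_sub, sub_mul, neg_mul, mul_neg, neg_neg, neg_zero, star_add, star_sub, star_mul, star_star, star_one, star_zero, one_mul, mul_one, mul_zero, zero_mul, sub_zero, zero_sub, add_zero, zero_add, mul_assoc, he, hff, hef, hfe, hse, hsf, he', hff', hef', hfe']
      have c2 : starLie f (e*(r*e)) = 0 := by simp [starLie, mul_add, add_mul, mul_sub, sub_mul, neg_mul, mul_neg, neg_neg, neg_zero, star_add, star_sub, star_mul, star_star, star_one, star_zero, one_mul, mul_one, mul_zero, zero_mul, sub_zero, zero_sub, add_zero, zero_add, mul_assoc, he, hff, hef, hfe, hse, hsf, he', hff', hef', hfe']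
      have hA : starLie f W = f*(q*e) - e*(p*f) := by
        have h := ME2 W _ _ hW f
        rw [c1, c2, hphi0, add_zero] at h
        exact hinj h
      have hWef : e * (W * f) = e*(p*f) := by
        have h := congrArg (fun t => e * t * f) hA
        simp only [starLie, mul_add, add_mul, mul_sub, sub_mul, neg_mul, mul_neg, neg_neg, neg_zero, star_add, star_sub, star_mul, star_star, star_one, star_zero, one_mul, mul_one, mul_zero, zero_mul, sub_zero, zero_sub, add_zero, zero_add, mul_assoc, he, hff, hef, hfe, hse, hsf, he', hff', hef', hfe'] at h
        exact neg_injective h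
      have hWfe : f * (W * e) = f*(q*e) := by
        have h := congrArg (fun t => f * t * e) hA
        simp only [starLie, mul_add, add_mul, mul_sub, sub_mul, neg_mul, mul_neg, neg_neg, neg_zero, star_add, star_sub, star_mul, star_star, star_one, star_zero, one_mul, mul_one, mul_zero, zero_mul, sub_zero, zero_sub, add_zero, zero_add, mul_assoc, he, hff, hef, hfe, hse, hsf, he', hff', hef', hfe'] at h
        exact h
      have c3 : starLie u (e*(p*f) + f*(q*e)) = 0 := by
        rw [starLie_add_right, uEF, uFE, add_zero]
      have hB : starLie u W = (2*Complex.I) • (e*(r*e)) := by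
        have h := ME2 W _ _ hW u
        rw [c3, uEE, hphi0, zero_add] at h
        exact hinj h
      have hWee : e * (W * e) = e*(r*e) := by
        apply csmul
        have h := congrArg (fun t => e * t * e) hB
        rw [uWe] at h
        rw [h, mul_smul_comm, smul_mul_assoc]
        simp [starLie, mul_add, add_mul, mul_sub, sub_mul, neg_mul, mul_neg, neg_neg, neg_zero, star_add, star_sub, star_mul, star_star, star_one, star_zero, one_mul, mul_one, mul_zero, zero_mul, sub_zero, zero_sub, add_zero, zero_add, mul_assoc, he, hff, hef, hfe, hse, hsf, he', hff', hef', hfe']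
      have hWff : f * (W * f) = 0 := by
        apply csmul
        rw [smul_zero]
        have h := congrArg (fun t => f * t * f) hB
        rw [uWf] at h
        rw [← neg_eq_zero]
        rw [h, mul_smul_comm, smul_mul_assoc]
        simp [starLie, mul_add, add_mul, mul_sub, sub_mul, neg_mul, mul_neg, neg_neg, neg_zero, star_add, star_sub, star_mul, star_star, star_one, star_zero, one_mul, mul_one, mul_zero, zero_mul, sub_zero, zero_sub, add_zero, zero_add, mul_assoc, he, hff, hef, hfe, hse, hsf, he', hff', hef', hfe']
      have hWeq : W = e*(p*f) + f*(q*e) + e*(r*e) := by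
        conv_lhs => rw [decomp W]
        rw [hWee, hWef, hWfe, hWff]
        abel
      rw [← hWeq]
      exact hW
    -- Claim 0 : φ Q + φ (-Q) = 0 for Q in fAe
    have claim0 : ∀ Q : A, f*Q*e = Q → φ Q + φ (-Q) = 0 := by
      intro Q hQ
      obtain ⟨q, rfl⟩ : ∃ q, Q = f*(q*e) := ⟨Q, by rw [← mul_assoc, hQ]⟩
      obtain ⟨W, hW⟩ := hsurj (φ (f*(q*e)) + φ (-(f*(q*e))))
      have c1 : starLie f (f*(q*e)) = f*(q*e) := by simp [starLie, mul_add, add_mul, mul_sub, sub_mul, neg_mul, mul_neg, neg_neg, neg_zero, star_add, star_sub, star_mul, star_star, star_one, star_zero, one_mul, mul_one, mul_zero, zero_mul, sub_zero, zero_sub, add_zero, zero_add, mul_assoc, he, hff, hef, hfe, hse, hsf, he', hff', hef', hfe']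
      have c2 : starLie f (-(f*(q*e))) = -(f*(q*e)) := by
        rw [starLie_neg_right, c1]
      have hA : starLie f W = W := by
        have h := ME2 W _ _ hW f
        rw [c1, c2, ← hW] at h
        exact hinj h
      have h1 : e * (W * e) = 0 := by
        have h := congrArg (fun t => e * t * e) hA
        simp only [starLie, mul_add, add_mul, mul_sub, sub_mul, neg_mul, mul_neg, neg_neg, neg_zero, star_add, star_sub, star_mul, star_star, star_one, star_zero, one_mul, mul_one, mul_zero, zero_mul, sub_zero, zero_sub, add_zero, zero_add, mul_assoc, he, hff, hef, hfe, hse, hsf, he', hff', hef', hfe'] at h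
        exact h.symm
      have h2 : e * (W * f) = 0 := by
        have h := congrArg (fun t => e * t * f) hA
        simp only [starLie, mul_add, add_mul, mul_sub, sub_mul, neg_mul, mul_neg, neg_neg, neg_zero, star_add, star_sub, star_mul, star_star, star_one, star_zero, one_mul, mul_one, mul_zero, zero_mul, sub_zero, zero_sub, add_zero, zero_add, mul_assoc, he, hff, hef, hfe, hse, hsf, he', hff', hef', hfe'] at h
        apply halfzero
        nth_rewrite 1 [← h]
        exact neg_add_cancel _
      have h4 : f * (W * f) = 0 := by
        have h := congrArg (fun t => f * t * f) hA
        simp only [starLie, mul_add, add_mul, mul_sub, sub_mul, neg_mul, mul_neg, neg_neg, neg_zero, star_add, star_sub, star_mul, star_star, star_one, star_zero, one_mul, mul_one, mul_zero, zero_mul, sub_zero, zero_sub, add_zero, zero_add, mul_assoc, he, hff, hef, hfe, hse, hsf, he', hff', hef', hfe'] at h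
        rw [sub_self] at h
        exact h.symm
      have c3 : starLie e (f*(q*e)) = -(f*(q*e)) := by simp [starLie, mul_add, add_mul, mul_sub, sub_mul, neg_mul, mul_neg, neg_neg, neg_zero, star_add, star_sub, star_mul, star_star, star_one, star_zero, one_mul, mul_one, mul_zero, zero_mul, sub_zero, zero_sub, add_zero, zero_add, mul_assoc, he, hff, hef, hfe, hse, hsf, he', hff', hef', hfe']
      have c4 : starLie e (-(f*(q*e))) = f*(q*e) := by
        rw [starLie_neg_right, c3, neg_neg]
      have hB : starLie e W = W := by
        have h := ME2 W _ _ hW e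
        rw [c3, c4, add_comm, ← hW] at h
        exact hinj h
      have h3 : f * (W * e) = 0 := by
        have h := congrArg (fun t => f * t * e) hB
        simp only [starLie, mul_add, add_mul, mul_sub, sub_mul, neg_mul, mul_neg, neg_neg, neg_zero, star_add, star_sub, star_mul, star_star, star_one, star_zero, one_mul, mul_one, mul_zero, zero_mul, sub_zero, zero_sub, add_zero, zero_add, mul_assoc, he, hff, hef, hfe, hse, hsf, he', hff', hef', hfe'] at h
        apply halfzero
        nth_rewrite 1 [← h]
        exact neg_add_cancel _
      have hW0 : W = 0 := by
        conv_lhs => rw [decomp W]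
        rw [h1, h2, h3, h4]
        simp
      rw [← hW, hW0]
      exact hphi0
    -- final assembly for n = 2
    have k1 : φ (e*(x*f) + -(f*(star y*e)) + f)
        = φ (e*(x*f) + -(f*(star y*e))) + φ f := by
      apply claim7
      · simp [starLie, mul_add, add_mul, mul_sub, sub_mul, neg_mul, mul_neg, neg_neg, neg_zero, star_add, star_sub, star_mul, star_star, star_one, star_zero, one_mul, mul_one, mul_zero, zero_mul, sub_zero, zero_sub, add_zero, zero_add, mul_assoc, he, hff, hef, hfe, hse, hsf, he', hff', hef', hfe']
      · simp [starLie, mul_add, add_mul, mul_sub, sub_mul, neg_mul, mul_neg, neg_neg, neg_zero, star_add, star_sub, star_mul, star_star, star_one, star_zero, one_mul, mul_one, mul_zero, zero_mul, sub_zero, zero_sub, add_zero, zero_add, mul_assoc, he, hff, hef, hfe, hse, hsf, he', hff', hef', hfe']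
      · simp [starLie, mul_add, add_mul, mul_sub, sub_mul, neg_mul, mul_neg, neg_neg, neg_zero, star_add, star_sub, star_mul, star_star, star_one, star_zero, one_mul, mul_one, mul_zero, zero_mul, sub_zero, zero_sub, add_zero, zero_add, mul_assoc, he, hff, hef, hfe, hse, hsf, he', hff', hef', hfe']
    have c5 : starLie (e + e*(y*f)) (e*(x*f) + -(f*(star y*e)) + f)
        = e*(x*f) + e*(y*f) + (-(e*(y*(f*(star y*e)))) - e*(x*(f*(star y*e)))) := by
      simp [starLie, mul_add, add_mul, mul_sub, sub_mul, neg_mul, mul_neg, neg_neg, neg_zero, star_add, star_sub, star_mul, star_star, star_one, star_zero, one_mul, mul_one, mul_zero, zero_mul, sub_zero, zero_sub, add_zero, zero_add, mul_assoc, he, hff, hef, hfe, hse, hsf, he', hff', hef', hfe']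
      abel
    have c6 : starLie (e + e*(y*f)) (e*(x*f) + -(f*(star y*e)))
        = e*(x*f) + f*(star y*e) + (-(e*(y*(f*(star y*e)))) - e*(x*(f*(star y*e)))) := by
      simp [starLie, mul_add, add_mul, mul_sub, sub_mul, neg_mul, mul_neg, neg_neg, neg_zero, star_add, star_sub, star_mul, star_star, star_one, star_zero, one_mul, mul_one, mul_zero, zero_mul, sub_zero, zero_sub, add_zero, zero_add, mul_assoc, he, hff, hef, hfe, hse, hsf, he', hff', hef', hfe']
      abel
    have c7 : starLie (e + e*(y*f)) f = e*(y*f) - f*(star y*e) := by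
      simp [starLie, mul_add, add_mul, mul_sub, sub_mul, neg_mul, mul_neg, neg_neg, neg_zero, star_add, star_sub, star_mul, star_star, star_one, star_zero, one_mul, mul_one, mul_zero, zero_mul, sub_zero, zero_sub, add_zero, zero_add, mul_assoc, he, hff, hef, hfe, hse, hsf, he', hff', hef', hfe']
    have I9 : φ (e*(x*f) + e*(y*f) + (-(e*(y*(f*(star y*e)))) - e*(x*(f*(star y*e)))))
        = φ (e*(x*f) + f*(star y*e) + (-(e*(y*(f*(star y*e)))) - e*(x*(f*(star y*e)))))
          + φ (e*(y*f) - f*(star y*e)) := by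
      have h := hb2 (e + e*(y*f)) (e*(x*f) + -(f*(star y*e)) + f)
      rw [k1, starLie_add_right (φ (e + e*(y*f))) (φ (e*(x*f) + -(f*(star y*e)))) (φ f),
        ← hb2, ← hb2, c5, c6, c7] at h
      exact h
    have s1 : φ (e*(x*f) + e*(y*f) + (-(e*(y*(f*(star y*e)))) - e*(x*(f*(star y*e)))))
        = φ (e*(x*f) + e*(y*f)) + φ (-(e*(y*(f*(star y*e)))) - e*(x*(f*(star y*e)))) := by
      apply claim2
      · simp [starLie, mul_add, add_mul, mul_sub, sub_mul, neg_mul, mul_neg, neg_neg, neg_zero, star_add, star_sub, star_mul, star_star, star_one, star_zero, one_mul, mul_one, mul_zero, zero_mul, sub_zero, zero_sub, add_zero, zero_add, mul_assoc, he, hff, hef, hfe, hse, hsf, he', hff', hef', hfe']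
      · simp [starLie, mul_add, add_mul, mul_sub, sub_mul, neg_mul, mul_neg, neg_neg, neg_zero, star_add, star_sub, star_mul, star_star, star_one, star_zero, one_mul, mul_one, mul_zero, zero_mul, sub_zero, zero_sub, add_zero, zero_add, mul_assoc, he, hff, hef, hfe, hse, hsf, he', hff', hef', hfe']
    have s2 : φ (e*(x*f) + f*(star y*e) + (-(e*(y*(f*(star y*e)))) - e*(x*(f*(star y*e)))))
        = φ (e*(x*f) + f*(star y*e)) + φ (-(e*(y*(f*(star y*e)))) - e*(x*(f*(star y*e)))) := by
      apply claim7s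
      · simp [starLie, mul_add, add_mul, mul_sub, sub_mul, neg_mul, mul_neg, neg_neg, neg_zero, star_add, star_sub, star_mul, star_star, star_one, star_zero, one_mul, mul_one, mul_zero, zero_mul, sub_zero, zero_sub, add_zero, zero_add, mul_assoc, he, hff, hef, hfe, hse, hsf, he', hff', hef', hfe']
      · simp [starLie, mul_add, add_mul, mul_sub, sub_mul, neg_mul, mul_neg, neg_neg, neg_zero, star_add, star_sub, star_mul, star_star, star_one, star_zero, one_mul, mul_one, mul_zero, zero_mul, sub_zero, zero_sub, add_zero, zero_add, mul_assoc, he, hff, hef, hfe, hse, hsf, he', hff', hef', hfe']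
      · simp [starLie, mul_add, add_mul, mul_sub, sub_mul, neg_mul, mul_neg, neg_neg, neg_zero, star_add, star_sub, star_mul, star_star, star_one, star_zero, one_mul, mul_one, mul_zero, zero_mul, sub_zero, zero_sub, add_zero, zero_add, mul_assoc, he, hff, hef, hfe, hse, hsf, he', hff', hef', hfe']
    have s3 : φ (e*(x*f) + f*(star y*e)) = φ (e*(x*f)) + φ (f*(star y*e)) := by
      apply claim3
      · simp [starLie, mul_add, add_mul, mul_sub, sub_mul, neg_mul, mul_neg, neg_neg, neg_zero, star_add, star_sub, star_mul, star_star, star_one, star_zero, one_mul, mul_one, mul_zero, zero_mul, sub_zero, zero_sub, add_zero, zero_add, mul_assoc, he, hff, hef, hfe, hse, hsf, he', hff', hef', hfe']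
      · simp [starLie, mul_add, add_mul, mul_sub, sub_mul, neg_mul, mul_neg, neg_neg, neg_zero, star_add, star_sub, star_mul, star_star, star_one, star_zero, one_mul, mul_one, mul_zero, zero_mul, sub_zero, zero_sub, add_zero, zero_add, mul_assoc, he, hff, hef, hfe, hse, hsf, he', hff', hef', hfe']
    have s4 : φ (e*(y*f) - f*(star y*e)) = φ (e*(y*f)) + φ (-(f*(star y*e))) := by
      rw [sub_eq_add_neg]
      apply claim3
      · simp [starLie, mul_add, add_mul, mul_sub, sub_mul, neg_mul, mul_neg, neg_neg, neg_zero, star_add, star_sub, star_mul, star_star, star_one, star_zero, one_mul, mul_one, mul_zero, zero_mul, sub_zero, zero_sub, add_zero, zero_add, mul_assoc, he, hff, hef, hfe, hse, hsf, he', hff', hef', hfe']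
      · simp [starLie, mul_add, add_mul, mul_sub, sub_mul, neg_mul, mul_neg, neg_neg, neg_zero, star_add, star_sub, star_mul, star_star, star_one, star_zero, one_mul, mul_one, mul_zero, zero_mul, sub_zero, zero_sub, add_zero, zero_add, mul_assoc, he, hff, hef, hfe, hse, hsf, he', hff', hef', hfe']
    have s5 : φ (f*(star y*e)) + φ (-(f*(star y*e))) = 0 := by
      apply claim0
      simp [starLie, mul_add, add_mul, mul_sub, sub_mul, neg_mul, mul_neg, neg_neg, neg_zero, star_add, star_sub, star_mul, star_star, star_one, star_zero, one_mul, mul_one, mul_zero, zero_mul, sub_zero, zero_sub, add_zero, zero_add, mul_assoc, he, hff, hef, hfe, hse, hsf, he', hff', hef', hfe']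
    have E := I9
    rw [s1, s2, s3, s4] at E
    calc φ (e*(x*f) + e*(y*f))
        = φ (e*(x*f) + e*(y*f)) + φ (-(e*(y*(f*(star y*e)))) - e*(x*(f*(star y*e))))
          - φ (-(e*(y*(f*(star y*e)))) - e*(x*(f*(star y*e)))) := by abel
      _ = (φ (e*(x*f)) + φ (f*(star y*e))
            + φ (-(e*(y*(f*(star y*e)))) - e*(x*(f*(star y*e))))
            + (φ (e*(y*f)) + φ (-(f*(star y*e)))))
          - φ (-(e*(y*(f*(star y*e)))) - e*(x*(f*(star y*e)))) := by rw [E]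
      _ = (φ (e*(x*f)) + φ (e*(y*f))) + (φ (f*(star y*e)) + φ (-(f*(star y*e)))) := by abel
      _ = φ (e*(x*f)) + φ (e*(y*f)) := by rw [s5, add_zero]

  · -- case n ≥ 3
    obtain ⟨m, hm⟩ : ∃ m, n - 2 = m + 1 := ⟨n - 3, by omega⟩
    have invE : ∀ (k : ℕ) (z : A), f * ((fun z => starLie z e)^[k] z) * e = f * z * e := by
      intro k
      induction k with
      | zero => intro z; simp
      | succ k ih =>
          intro z
          rw [Function.iterate_succ_apply, ih]
          show f * (z * e - e * star z) * e = f * z * e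
          simp [starLie, mul_add, add_mul, mul_sub, sub_mul, neg_mul, mul_neg, neg_neg, neg_zero, star_add, star_sub, star_mul, star_star, star_one, star_zero, one_mul, mul_one, mul_zero, zero_mul, sub_zero, zero_sub, add_zero, zero_add, mul_assoc, he, hff, hef, hfe, hse, hsf, he', hff', hef', hfe']
    have invF : ∀ (k : ℕ) (z : A), e * ((fun z => starLie z f)^[k] z) * f = e * z * f := by
      intro k
      induction k with
      | zero => intro z; simp
      | succ k ih =>
          intro z
          rw [Function.iterate_succ_apply, ih]
          show e * (z * f - f * star z) * f = e * z * f
          simp [starLie, mul_add, add_mul, mul_sub, sub_mul, neg_mul, mul_neg, neg_neg, neg_zero, star_add, star_sub, star_mul, star_star, star_one, star_zero, one_mul, mul_one, mul_zero, zero_mul, sub_zero, zero_sub, add_zero, zero_add, mul_assoc, he, hff, hef, hfe, hse, hsf, he', hff', hef', hfe']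
    have corE : ∀ a b : A, f * (pn n a b e) * e = f * (starLie a b) * e := by
      intro a b; unfold pn; rw [hm]; exact invE (m+1) _
    have corF : ∀ a b : A, e * (pn n a b f) * f = e * (starLie a b) * f := by
      intro a b; unfold pn; rw [hm]; exact invF (m+1) _
    have kill1 : ∀ (u v : A), pn n (f*u) (e*(v*f)) e = 0 := by
      intro u v; apply pn_kill n m hm; simp [starLie, mul_add, add_mul, mul_sub, sub_mul, neg_mul, mul_neg, neg_neg, neg_zero, star_add, star_sub, star_mul, star_star, star_one, star_zero, one_mul, mul_one, mul_zero, zero_mul, sub_zero, zero_sub, add_zero, zero_add, mul_assoc, he, hff, hef, hfe, hse, hsf, he', hff', hef', hfe']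
    have kill2 : ∀ (u v : A), pn n (f*u) (f*(v*f)) e = 0 := by
      intro u v; apply pn_kill n m hm; simp [starLie, mul_add, add_mul, mul_sub, sub_mul, neg_mul, mul_neg, neg_neg, neg_zero, star_add, star_sub, star_mul, star_star, star_one, star_zero, one_mul, mul_one, mul_zero, zero_mul, sub_zero, zero_sub, add_zero, zero_add, mul_assoc, he, hff, hef, hfe, hse, hsf, he', hff', hef', hfe']
    have kill3 : ∀ (u v : A), pn n (e*(u*f)) (e*(v*f)) f = 0 := by
      intro u v; apply pn_kill n m hm; simp [starLie, mul_add, add_mul, mul_sub, sub_mul, neg_mul, mul_neg, neg_neg, neg_zero, star_add, star_sub, star_mul, star_star, star_one, star_zero, one_mul, mul_one, mul_zero, zero_mul, sub_zero, zero_sub, add_zero, zero_add, mul_assoc, he, hff, hef, hfe, hse, hsf, he', hff', hef', hfe']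
    have kill4 : ∀ (v : A), pn n e (f*(v*f)) f = 0 := by
      intro v; apply pn_kill n m hm; simp [starLie, mul_add, add_mul, mul_sub, sub_mul, neg_mul, mul_neg, neg_neg, neg_zero, star_add, star_sub, star_mul, star_star, star_one, star_zero, one_mul, mul_one, mul_zero, zero_mul, sub_zero, zero_sub, add_zero, zero_add, mul_assoc, he, hff, hef, hfe, hse, hsf, he', hff', hef', hfe']
    have kill6 : pn n e f f = 0 := by
      apply pn_kill n m hm; simp [starLie, mul_add, add_mul, mul_sub, sub_mul, neg_mul, mul_neg, neg_neg, neg_zero, star_add, star_sub, star_mul, star_star, star_one, star_zero, one_mul, mul_one, mul_zero, zero_mul, sub_zero, zero_sub, add_zero, zero_add, mul_assoc, he, hff, hef, hfe, hse, hsf, he', hff', hef', hfe']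
    have fixEf : ∀ v : A, pn n e (e*(v*f)) f = e*(v*f) - star (e*(v*f)) := by
      intro v; apply pn_fix n m hm
      · simp [starLie, mul_add, add_mul, mul_sub, sub_mul, neg_mul, mul_neg, neg_neg, neg_zero, star_add, star_sub, star_mul, star_star, star_one, star_zero, one_mul, mul_one, mul_zero, zero_mul, sub_zero, zero_sub, add_zero, zero_add, mul_assoc, he, hff, hef, hfe, hse, hsf, he', hff', hef', hfe']
      · simp [starLie, mul_add, add_mul, mul_sub, sub_mul, neg_mul, mul_neg, neg_neg, neg_zero, star_add, star_sub, star_mul, star_star, star_one, star_zero, one_mul, mul_one, mul_zero, zero_mul, sub_zero, zero_sub, add_zero, zero_add, mul_assoc, he, hff, hef, hfe, hse, hsf, he', hff', hef', hfe']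
    have fixMf : ∀ v : A, pn n (e*(v*f)) f f = e*(v*f) - star (e*(v*f)) := by
      intro v; apply pn_fix n m hm
      · simp [starLie, mul_add, add_mul, mul_sub, sub_mul, neg_mul, mul_neg, neg_neg, neg_zero, star_add, star_sub, star_mul, star_star, star_one, star_zero, one_mul, mul_one, mul_zero, zero_mul, sub_zero, zero_sub, add_zero, zero_add, mul_assoc, he, hff, hef, hfe, hse, hsf, he', hff', hef', hfe']
      · simp [starLie, mul_add, add_mul, mul_sub, sub_mul, neg_mul, mul_neg, neg_neg, neg_zero, star_add, star_sub, star_mul, star_star, star_one, star_zero, one_mul, mul_one, mul_zero, zero_mul, sub_zero, zero_sub, add_zero, zero_add, mul_assoc, he, hff, hef, hfe, hse, hsf, he', hff', hef', hfe']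
    -- Claim 1 : additivity for (eAf, fAf) pairs
    have claim1 : ∀ (p q : A), φ (e*(p*f) + f*(q*f)) = φ (e*(p*f)) + φ (f*(q*f)) := by
      intro p q
      obtain ⟨W, hW⟩ := hsurj (φ (e*(p*f)) + φ (f*(q*f)))
      have hWe : W * e = 0 := by
        apply spf
        intro Y
        have h := ME e hbe W _ _ hW (f*Y)
        rw [kill1, kill2, hphi0, add_zero] at h
        have h0 : pn n (f*Y) W e = 0 := toZero _ h
        have h2 : f * (starLie (f*Y) W) * e = 0 := by rw [← corE, h0]; simp
        simp only [starLie, mul_add, add_mul, mul_sub, sub_mul, neg_mul, mul_neg, neg_neg, neg_zero, star_add, star_sub, star_mul, star_star, star_one, star_zero, one_mul, mul_one, mul_zero, zero_mul, sub_zero, zero_sub, add_zero, zero_add, mul_assoc, he, hff, hef, hfe, hse, hsf, he', hff', hef', hfe'] at h2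
        rw [mul_assoc]
        exact h2
      have hWf2 : f * (W * f) = f*(q*f) := by
        have h5 : f*(W*f) - f*(q*f) = 0 := by
          apply spe
          intro Y
          have h := ME f hbf W _ _ hW (e*(Y*f))
          rw [kill3, hphi0, zero_add] at h
          have hEq : pn n (e*(Y*f)) W f = pn n (e*(Y*f)) (f*(q*f)) f := hinj h
          have h7 := congrArg (fun t => e * t * f) hEq
          rw [corF, corF] at h7
          simp only [starLie, mul_add, add_mul, mul_sub, sub_mul, neg_mul, mul_neg, neg_neg, neg_zero, star_add, star_sub, star_mul, star_star, star_one, star_zero, one_mul, mul_one, mul_zero, zero_mul, sub_zero, zero_sub, add_zero, zero_add, mul_assoc, he, hff, hef, hfe, hse, hsf, he', hff', hef', hfe'] at h7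
          simp only [mul_sub, mul_assoc, sub_eq_zero]
          exact h7
        rw [sub_eq_zero] at h5
        exact h5
      have hWf1 : e * (W * f) = e*(p*f) := by
        have h := ME f hbf W _ _ hW e
        rw [kill4, hphi0, add_zero] at h
        have hEq : pn n e W f = pn n e (e*(p*f)) f := hinj h
        have h7 := congrArg (fun t => e * t * f) hEq
        rw [corF, corF] at h7
        simp only [starLie, mul_add, add_mul, mul_sub, sub_mul, neg_mul, mul_neg, neg_neg, neg_zero, star_add, star_sub, star_mul, star_star, star_one, star_zero, one_mul, mul_one, mul_zero, zero_mul, sub_zero, zero_sub, add_zero, zero_add, mul_assoc, he, hff, hef, hfe, hse, hsf, he', hff', hef', hfe'] at h7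
        exact h7
      have hWeq : W = e*(p*f) + f*(q*f) := by
        conv_lhs => rw [decomp W]
        rw [hWe, hWf1, hWf2]
        simp
      rw [← hWeq]
      exact hW
    -- the (★) step
    have hNf : φ (e*(x*f) + f) = φ (e*(x*f)) + φ f := by
      have h := claim1 x 1
      simpa [hff] using h
    have e1 : pn n (e + e*(y*f)) (e*(x*f)) f = e*(x*f) - star (e*(x*f)) := by
      rw [pn_add_left, fixEf, kill3, add_zero]
    have e2 : pn n (e + e*(y*f)) f f = e*(y*f) - star (e*(y*f)) := by
      rw [pn_add_left, kill6, fixMf, zero_add]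
    have e3 : pn n (e + e*(y*f)) (e*(x*f) + f) f
        = (e*(x*f) - star (e*(x*f))) + (e*(y*f) - star (e*(y*f))) := by
      rw [pn_add_right, e1, e2]
    have hstar : φ ((e*(x*f) - star (e*(x*f))) + (e*(y*f) - star (e*(y*f))))
        = φ (e*(x*f) - star (e*(x*f))) + φ (e*(y*f) - star (e*(y*f))) := by
      have h1 : φ (pn n (e + e*(y*f)) (e*(x*f) + f) f)
          = φ (pn n (e + e*(y*f)) (e*(x*f)) f) + φ (pn n (e + e*(y*f)) f f) := by
        rw [hbf, hNf, pn_add_right, ← hbf, ← hbf]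
      rw [e3, e1, e2] at h1
      exact h1
    -- the T step
    obtain ⟨T, hT⟩ := hsurj (φ (e*(x*f)) + φ (e*(y*f)))
    have hTe : T * e = 0 := by
      apply spf
      intro Y
      have h := ME e hbe T _ _ hT (f*Y)
      rw [kill1, kill1, hphi0, add_zero] at h
      have h0 : pn n (f*Y) T e = 0 := toZero _ h
      have h2 : f * (starLie (f*Y) T) * e = 0 := by rw [← corE, h0]; simp
      simp only [starLie, mul_add, add_mul, mul_sub, sub_mul, neg_mul, mul_neg, neg_neg, neg_zero, star_add, star_sub, star_mul, star_star, star_one, star_zero, one_mul, mul_one, mul_zero, zero_mul, sub_zero, zero_sub, add_zero, zero_add, mul_assoc, he, hff, hef, hfe, hse, hsf, he', hff', hef', hfe'] at h2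
      rw [mul_assoc]
      exact h2
    have hTff : f * (T * f) = 0 := by
      apply spe
      intro Y
      have h := ME f hbf T _ _ hT (e*(Y*f))
      rw [kill3, kill3, hphi0, add_zero] at h
      have h0 : pn n (e*(Y*f)) T f = 0 := toZero _ h
      have h2 : e * (starLie (e*(Y*f)) T) * f = 0 := by rw [← corF, h0]; simp
      simp only [starLie, mul_add, add_mul, mul_sub, sub_mul, neg_mul, mul_neg, neg_neg, neg_zero, star_add, star_sub, star_mul, star_star, star_one, star_zero, one_mul, mul_one, mul_zero, zero_mul, sub_zero, zero_sub, add_zero, zero_add, mul_assoc, he, hff, hef, hfe, hse, hsf, he', hff', hef', hfe'] at h2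
      rw [mul_assoc]
      exact h2
    have hmain : pn n e T f
        = e*(x*f) - star (e*(x*f)) + (e*(y*f) - star (e*(y*f))) := by
      have h := ME f hbf T _ _ hT e
      rw [fixEf, fixEf, ← hstar] at h
      exact hinj h
    have hTsum : T * e + T * f = T := by rw [← mul_add, hef1, mul_one]
    have heT : e * T = e * (T * f) := by
      conv_lhs => rw [← hTsum]
      rw [mul_add, hTe, mul_zero, zero_add]
    have hsame : starLie e T = starLie e (e*(T*f)) := by
      simp only [starLie, hse, hTe, mul_zero, sub_zero, he']
      rw [heT]
      have : e * (T * f) * e = 0 := by rw [mul_assoc, mul_assoc, hfe, mul_zero, mul_zero]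
      rw [this, sub_zero]
    have hT12 : pn n e T f = e*(T*f) - star (e*(T*f)) := by
      calc pn n e T f = pn n e (e*(T*f)) f := by unfold pn; rw [hsame]
        _ = e*(T*f) - star (e*(T*f)) := fixEf T
    have heq : e*(T*f) - star (e*(T*f))
        = e*(x*f) - star (e*(x*f)) + (e*(y*f) - star (e*(y*f))) := hT12.symm.trans hmain
    have hfv : e*(T*f) = e*(x*f) + e*(y*f) := by
      have h := congrArg (fun t => e * t * f) heq
      simp only [starLie, mul_add, add_mul, mul_sub, sub_mul, neg_mul, mul_neg, neg_neg, neg_zero, star_add, star_sub, star_mul, star_star, star_one, star_zero, one_mul, mul_one, mul_zero, zero_mul, sub_zero, zero_sub, add_zero, zero_add, mul_assoc, he, hff, hef, hfe, hse, hsf, he', hff', hef', hfe'] at h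
      exact h
    have hTfin : T = e*(x*f) + e*(y*f) := by
      conv_lhs => rw [decomp T]
      rw [hTe, hTff, hfv, mul_zero, mul_zero, add_zero, add_zero, zero_add]
    rw [← hTfin]
    exact hT


variable {A A' : Type*}
  [NormedRing A] [StarRing A] [CStarRing A] [NormedAlgebra ℂ A]
  [CompleteSpace A] [StarModule ℂ A]
  [NormedRing A'] [StarRing A'] [CStarRing A'] [NormedAlgebra ℂ A']
  [CompleteSpace A'] [StarModule ℂ A']

theorem stmt7
    (P₁ : A) (hP₁proj : P₁ * P₁ = P₁) (hP₁star : star P₁ = P₁)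
    (hP₁ne0 : P₁ ≠ 0) (hP₁ne1 : P₁ ≠ 1)
    (P₂ : A) (hP₂ : P₂ = 1 - P₁)
    (hspade : ∀ Pj ∈ ({P₁, P₂} : Set A), ∀ X : A, (∀ Y : A, Pj * Y * X = 0) → X = 0)
    (n : ℕ) (hn : 2 ≤ n)
    (φ : A → A') (hbij : Function.Bijective φ) (hunit : φ 1 = 1)
    (hbullet : ∀ a b : A, ∀ Ξ ∈ ({P₁, P₂, 1} : Set A),
      φ (pn n a b Ξ) = pn n (φ a) (φ b) (φ Ξ))
    :
    ∀ Pj Pk : A, (Pj = P₁ ∧ Pk = P₂) ∨ (Pj = P₂ ∧ Pk = P₁) →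
      ∀ a b : A, (∃ x : A, a = Pj * x * Pk) → (∃ y : A, b = Pj * y * Pk) →
        φ (a + b) = φ a + φ b := by
  obtain ⟨hinj, hsurj⟩ := hbij
  have hP₂proj : P₂ * P₂ = P₂ := by
    rw [hP₂, sub_mul, one_mul, mul_sub, mul_one, hP₁proj]; abel
  have hP₂star : star P₂ = P₂ := by rw [hP₂]; simp [star_sub, hP₁star]
  have h21 : P₁ = 1 - P₂ := by rw [hP₂, sub_sub_cancel]
  have sp1 := hspade P₁ (by simp)
  have sp2 := hspade P₂ (by simp)
  have hbP₁ : ∀ a b : A, φ (pn n a b P₁) = pn n (φ a) (φ b) (φ P₁) :=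
    fun a b => hbullet a b P₁ (by simp)
  have hbP₂ : ∀ a b : A, φ (pn n a b P₂) = pn n (φ a) (φ b) (φ P₂) :=
    fun a b => hbullet a b P₂ (by simp)
  have hbone : ∀ a b : A, φ (pn n a b 1) = pn n (φ a) (φ b) (φ 1) :=
    fun a b => hbullet a b 1 (by simp)
  have key : ∀ (p q w : A), p*p = p → q*q = q → p*(p*w*q)*q = p*w*q := by
    intro p q w hp hq
    calc p*(p*w*q)*q = (p*p)*(w*(q*q)) := by simp only [mul_assoc]
      _ = p*w*q := by rw [hp, hq, mul_assoc]
  rintro Pj Pk (⟨h1, h2⟩ | ⟨h1, h2⟩) a b ⟨xx, hxx⟩ ⟨yy, hyy⟩ <;> rw [h1, h2] at hxx hyy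
  · exact master P₁ hP₁proj hP₁star P₂ hP₂ sp1 sp2 n hn φ hinj hsurj hunit hbP₁ hbP₂ hbone a b
      (by rw [hxx]; exact key P₁ P₂ xx hP₁proj hP₂proj)
      (by rw [hyy]; exact key P₁ P₂ yy hP₁proj hP₂proj)
  · exact master P₂ hP₂proj hP₂star P₁ h21 sp2 sp1 n hn φ hinj hsurj hunit hbP₂ hbP₁ hbone a b
      (by rw [hxx]; exact key P₂ P₁ xx hP₂proj hP₁proj)
      (by rw [hyy]; exact key P₂ P₁ yy hP₂proj hP₁proj)
end

section
/- Let A and A' be unital C*-algebras, P₁ a nontrivial symmetric projection in A, P₂ = I_A − P₁, and fix an integer n ≥ 2. Let φ: A → A' be a bijective map with φ(I_A) = I_{A'}, φ(λA) = λφ(A) for all λ ∈ ℂ, φ(0) = 0, satisfying (•): φ(p_{n*}(A,B,Ξ,…,Ξ)) = p_{n*}(φ(A),φ(B),φ(Ξ),…,φ(Ξ)) for all A, B ∈ A and Ξ ∈ {P₁, P₂, I_A}. Then for j ∈ {1,2}, Q_j = φ(P_j) is a symmetric projection in A', i.e., Q_j = Q_j² = Q_j*. -/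
/-- Iterating `z ↦ [z, 1]_*` on a skew-adjoint element just keeps doubling it. -/
lemma skew_iter {R : Type*} [Ring R] [StarRing R] [Module ℂ R] [StarModule ℂ R]
    (z : R) (hz : star z = -z) (k : ℕ) :
    (fun w => starLie w (1 : R))^[k] z = ((2 : ℂ) ^ k) • z := by
  induction k with
  | zero => simp
  | succ k ih =>
    rw [Function.iterate_succ_apply', ih]
    have hstar : star ((2 : ℂ) ^ k) = (2 : ℂ) ^ k := by
      simp [Complex.star_def]
    show ((2:ℂ)^k • z) * 1 - 1 * star ((2:ℂ)^k • z) = (2:ℂ)^(k+1) • z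
    rw [mul_one, one_mul, star_smul, hstar, hz, smul_neg, sub_neg_eq_add,
      ← add_smul, pow_succ]
    ring_nf

lemma key {A A' : Type*}
    [NormedRing A] [StarRing A] [CStarRing A] [NormedAlgebra ℂ A]
    [CompleteSpace A] [StarModule ℂ A]
    [NormedRing A'] [StarRing A'] [CStarRing A'] [NormedAlgebra ℂ A']
    [CompleteSpace A'] [StarModule ℂ A']
    (n : ℕ)
    (φ : A → A') (hunit : φ 1 = 1)
    (hsmul : ∀ (c : ℂ) (a : A), φ (c • a) = c • φ a)
    (hzero : φ 0 = 0)
    (P : A) (hp : P * P = P) (hs : star P = P)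
    (h1 : φ (pn n P 1 1) = pn n (φ P) (φ 1) (φ 1))
    (h2 : φ (pn n (Complex.I • P) P 1) = pn n (φ (Complex.I • P)) (φ P) (φ 1)) :
    φ P * φ P = φ P ∧ star (φ P) = φ P := by
  set Q := φ P with hQ
  -- Step 1 : Q is self-adjoint
  have e1 : pn n P 1 1 = 0 := by
    unfold pn
    rw [show starLie P (1 : A) = 0 by simp [starLie, hs]]
    rw [skew_iter (0 : A) (by simp) (n - 2), smul_zero]
  have e2 : pn n Q (φ 1) (φ 1) = (2 : ℂ) ^ (n - 2) • (Q - star Q) := by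
    rw [hunit]
    unfold pn
    rw [show starLie Q (1 : A') = Q - star Q by simp [starLie]]
    refine skew_iter _ ?_ _
    rw [star_sub, star_star]
    abel
  rw [e1, hzero, e2] at h1
  have h2pow : ((2 : ℂ) ^ (n - 2)) ≠ 0 := pow_ne_zero _ two_ne_zero
  have hQs : star Q = Q := by
    have h := (smul_eq_zero.mp h1.symm).resolve_left h2pow
    exact (sub_eq_zero.mp h).symm
  refine ⟨?_, hQs⟩
  -- Step 2 : Q is idempotent
  have e3 : pn n (Complex.I • P) P 1 =
      ((2 : ℂ) ^ (n - 2) * (2 * Complex.I)) • P := by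
    unfold pn
    have hst : star (Complex.I • P) = (-Complex.I) • P := by
      rw [star_smul, hs, Complex.star_def, Complex.conj_I]
    have hsl : starLie (Complex.I • P) P = (2 * Complex.I) • P := by
      rw [starLie, hst, smul_mul_assoc, mul_smul_comm, hp, ← sub_smul]
      ring_nf
    rw [hsl, skew_iter _ ?_ _, smul_smul]
    rw [star_smul, hs,
      show star (2 * Complex.I) = -(2 * Complex.I) by simp [Complex.star_def]]
    exact neg_smul _ _
  have e4 : pn n (φ (Complex.I • P)) Q (φ 1) =
      ((2 : ℂ) ^ (n - 2) * (2 * Complex.I)) • (Q * Q) := by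
    rw [hunit, hsmul]
    unfold pn
    have hst : star (Complex.I • Q) = (-Complex.I) • Q := by
      rw [star_smul, hQs, Complex.star_def, Complex.conj_I]
    have hsl : starLie (Complex.I • Q) Q = (2 * Complex.I) • (Q * Q) := by
      rw [starLie, hst, smul_mul_assoc, mul_smul_comm, ← sub_smul]
      ring_nf
    rw [hsl, skew_iter _ ?_ _, smul_smul]
    rw [star_smul,
      show star (Q * Q) = Q * Q by rw [star_mul, hQs],
      show star (2 * Complex.I) = -(2 * Complex.I) by simp [Complex.star_def]]
    exact neg_smul _ _
  rw [e3, hsmul, e4] at h2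
  have hc : ((2 : ℂ) ^ (n - 2) * (2 * Complex.I)) ≠ 0 := by
    refine mul_ne_zero h2pow (by simp [Complex.I_ne_zero])
  have h3 := congrArg (fun x => ((2 : ℂ) ^ (n - 2) * (2 * Complex.I))⁻¹ • x) h2
  simp only [smul_smul, inv_mul_cancel₀ hc, one_smul] at h3
  exact h3.symm

variable {A A' : Type*}
  [NormedRing A] [StarRing A] [CStarRing A] [NormedAlgebra ℂ A]
  [CompleteSpace A] [StarModule ℂ A]
  [NormedRing A'] [StarRing A'] [CStarRing A'] [NormedAlgebra ℂ A']
  [CompleteSpace A'] [StarModule ℂ A']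

theorem stmt10
    (P₁ : A) (hP₁proj : P₁ * P₁ = P₁) (hP₁star : star P₁ = P₁)
    (hP₁ne0 : P₁ ≠ 0) (hP₁ne1 : P₁ ≠ 1)
    (P₂ : A) (hP₂ : P₂ = 1 - P₁)
    (n : ℕ) (hn : 2 ≤ n)
    (φ : A → A') (hbij : Function.Bijective φ) (hunit : φ 1 = 1)
    (hsmul : ∀ (c : ℂ) (a : A), φ (c • a) = c • φ a)
    (hzero : φ 0 = 0)
    (hbullet : ∀ a b : A, ∀ Ξ ∈ ({P₁, P₂, 1} : Set A),
      φ (pn n a b Ξ) = pn n (φ a) (φ b) (φ Ξ))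
    :
    ∀ Pj ∈ ({P₁, P₂} : Set A), φ Pj * φ Pj = φ Pj ∧ star (φ Pj) = φ Pj := by
  have hmem1 : (1 : A) ∈ ({P₁, P₂, 1} : Set A) := by simp
  intro Pj hPj
  have hcases : Pj = P₁ ∨ Pj = P₂ := by simpa using hPj
  have hp : Pj * Pj = Pj := by
    rcases hcases with rfl | rfl
    · exact hP₁proj
    · rw [hP₂, sub_mul, mul_sub, mul_sub, mul_one, one_mul, mul_one, hP₁proj]
      abel
  have hs : star Pj = Pj := by
    rcases hcases with rfl | rfl
    · exact hP₁star
    · rw [hP₂, star_sub, star_one, hP₁star]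
  exact key n φ hunit hsmul hzero Pj hp hs
    (hbullet Pj 1 1 hmem1) (hbullet (Complex.I • Pj) Pj 1 hmem1)
end

section
/- Let A and A' be unital C*-algebras, P₁ a nontrivial symmetric projection in A, P₂ = I_A − P₁, and suppose A satisfies (♠): for j ∈ {1,2}, P_j A X = {0} implies X = 0. Fix an integer n ≥ 2 and let φ: A → A' be a bijective map with φ(I_A) = I_{A'}, φ(λA) = λφ(A) for all λ ∈ ℂ, satisfying (•): φ(p_{n*}(A,B,Ξ,…,Ξ)) = p_{n*}(φ(A),φ(B),φ(Ξ),…,φ(Ξ)) for all A, B ∈ A and Ξ ∈ {P₁, P₂, I_A}. Then for all A ∈ A and j ∈ {1,2}: φ(P_j A) = φ(P_j)φ(A) and φ(A P_j) = φ(A)φ(P_j). -/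
variable {A A' : Type*}
  [NormedRing A] [StarRing A] [CStarRing A] [NormedAlgebra ℂ A]
  [CompleteSpace A] [StarModule ℂ A]
  [NormedRing A'] [StarRing A'] [CStarRing A'] [NormedAlgebra ℂ A']
  [CompleteSpace A'] [StarModule ℂ A']

private lemma smul_cancel' {M : Type*} [AddCommGroup M] [Module ℂ M] {c : ℂ}
    (hc : c ≠ 0) {x y : M} (h : c • x = c • y) : x = y := by
  have h2 := congrArg (fun v => c⁻¹ • v) h
  simpa [inv_smul_smul₀ hc] using h2

private lemma iterate_starLie_one {R : Type*} [Ring R] [StarRing R] [Module ℂ R]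
    [StarModule ℂ R] (j : ℕ) (w : R) :
    (fun z => starLie z 1)^[j + 1] w = ((2 : ℂ) ^ j) • (w - star w) := by
  induction j with
  | zero =>
      simp [starLie]
  | succ j ih =>
      rw [Function.iterate_succ_apply', ih]
      have hstar2 : star ((2 : ℂ) ^ j) = (2 : ℂ) ^ j := by
        simp
      have h1 : starLie (((2 : ℂ) ^ j) • (w - star w)) (1 : R)
          = ((2 : ℂ) ^ j) • ((w - star w) - star (w - star w)) := by
        simp [starLie, star_smul, hstar2, smul_sub]
      rw [h1]
      have h2 : (w - star w) - star (w - star w) = (w - star w) + (w - star w) := by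
        rw [star_sub, star_star]
        abel
      rw [h2, smul_add, pow_succ, mul_comm ((2:ℂ)^j) 2, mul_smul, two_smul]

theorem stmt11
    (P₁ : A) (hP₁proj : P₁ * P₁ = P₁) (hP₁star : star P₁ = P₁)
    (hP₁ne0 : P₁ ≠ 0) (hP₁ne1 : P₁ ≠ 1)
    (P₂ : A) (hP₂ : P₂ = 1 - P₁)
    (hspade : ∀ Pj ∈ ({P₁, P₂} : Set A), ∀ X : A, (∀ Y : A, Pj * Y * X = 0) → X = 0)
    (n : ℕ) (hn : 2 ≤ n)
    (φ : A → A') (hbij : Function.Bijective φ) (hunit : φ 1 = 1)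
    (hsmul : ∀ (c : ℂ) (a : A), φ (c • a) = c • φ a)
    (hbullet : ∀ a b : A, ∀ Ξ ∈ ({P₁, P₂, 1} : Set A),
      φ (pn n a b Ξ) = pn n (φ a) (φ b) (φ Ξ))
    :
    ∀ a : A, ∀ Pj ∈ ({P₁, P₂} : Set A),
      φ (Pj * a) = φ Pj * φ a ∧ φ (a * Pj) = φ a * φ Pj := by
  have h2C : (2 : ℂ) ≠ 0 := by norm_num
  have hΞ1 : (1 : A) ∈ ({P₁, P₂, 1} : Set A) := by simp
  -- φ 0 = 0
  have hφ0 : φ 0 = 0 := by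
    have h := hsmul 0 0
    simpa using h
  -- φ (-x) = - φ x
  have hneg : ∀ x : A, φ (-x) = -φ x := by
    intro x
    have h := hsmul (-1) x
    simpa using h
  -- φ (x + x) = φ x + φ x
  have hdouble : ∀ x : A, φ (x + x) = φ x + φ x := by
    intro x
    have h : x + x = (2 : ℂ) • x := (two_smul ℂ x).symm
    rw [h, hsmul, two_smul]
  -- (T1) : φ (S (starLie a b)) = S (starLie (φ a) (φ b))
  have hT1 : ∀ a b : A, φ (starLie a b - star (starLie a b))
      = starLie (φ a) (φ b) - star (starLie (φ a) (φ b)) := by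
    intro a b
    have lA : ∀ w : A, starLie w (1 : A) = w - star w := by
      intro w; simp [starLie]
    have lA' : ∀ w : A', starLie w (1 : A') = w - star w := by
      intro w; simp [starLie]
    rcases eq_or_lt_of_le hn with h2 | h3
    · -- n = 2
      have hn2 : n - 2 = 0 := by omega
      have e1 := hbullet a b 1 hΞ1
      have e2 := hbullet (starLie a b) 1 1 hΞ1
      simp only [pn, hn2, Function.iterate_zero, id_eq] at e1 e2
      rw [hunit] at e2
      rw [e1] at e2
      rw [lA] at e2
      rw [lA'] at e2
      exact e2
    · -- n ≥ 3
      have hn3 : n - 2 = (n - 3) + 1 := by omega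
      have e1 := hbullet a b 1 hΞ1
      rw [hunit] at e1
      simp only [pn, hn3] at e1
      rw [iterate_starLie_one, iterate_starLie_one] at e1
      rw [hsmul] at e1
      exact smul_cancel' (pow_ne_zero _ h2C) e1
  -- (F1)
  have hF1 : ∀ x : A, φ (x - star x) = φ x - star (φ x) := by
    intro x
    have e := hT1 x 1
    rw [hunit] at e
    have l1 : starLie x (1 : A) - star (starLie x 1) = (2 : ℂ) • (x - star x) := by
      simp only [starLie, mul_one, one_mul, star_sub, star_star, two_smul]
      abel
    have l2 : starLie (φ x) (1 : A') - star (starLie (φ x) 1)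
        = (2 : ℂ) • (φ x - star (φ x)) := by
      simp only [starLie, mul_one, one_mul, star_sub, star_star, two_smul]
      abel
    rw [l1, l2, hsmul] at e
    exact smul_cancel' h2C e
  -- φ preserves self-adjointness
  have hsa : ∀ x : A, star x = x → star (φ x) = φ x := by
    intro x hx
    have e := hF1 x
    rw [hx, sub_self, hφ0] at e
    exact (sub_eq_zero.mp e.symm).symm
  -- φ preserves skewness
  have hskew : ∀ x : A, star x = -x → star (φ x) = -φ x := by
    intro x hx
    have e := hF1 x
    rw [hx, sub_neg_eq_add, hdouble] at e
    -- e : φ x + φ x = φ x - star (φ x)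
    have h7 : star (φ x) = φ x - (φ x + φ x) := by
      rw [e]; abel
    rw [h7]; abel
  -- (T2) : for b self-adjoint
  have hT2 : ∀ a b : A, star b = b →
      φ (a * b - b * star a) = φ a * φ b - φ b * star (φ a) := by
    intro a b hb
    have e := hT1 a b
    have hY : star (φ b) = φ b := hsa b hb
    have l1 : starLie a b - star (starLie a b) = (2 : ℂ) • (a * b - b * star a) := by
      simp only [starLie, star_sub, star_mul, star_star, hb, two_smul]
      abel
    have l2 : starLie (φ a) (φ b) - star (starLie (φ a) (φ b))
        = (2 : ℂ) • (φ a * φ b - φ b * star (φ a)) := by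
      simp only [starLie, star_sub, star_mul, star_star, hY, two_smul]
      abel
    rw [l1, l2, hsmul] at e
    exact smul_cancel' h2C e
  -- (T2')
  have hT2' : ∀ a b : A, star b = b →
      φ (a * b + b * star a) = φ a * φ b + φ b * star (φ a) := by
    intro a b hb
    have e := hT2 (Complex.I • a) b hb
    have l1 : (Complex.I • a) * b - b * star (Complex.I • a)
        = Complex.I • (a * b + b * star a) := by
      rw [star_smul, smul_mul_assoc, mul_smul_comm, smul_add]
      simp [Complex.star_def, Complex.conj_I, neg_smul]
    have l2 : φ (Complex.I • a) * φ b - φ b * star (φ (Complex.I • a))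
        = Complex.I • (φ a * φ b + φ b * star (φ a)) := by
      rw [hsmul, star_smul, smul_mul_assoc, mul_smul_comm, smul_add]
      simp [Complex.star_def, Complex.conj_I, neg_smul]
    rw [l1, l2, hsmul] at e
    exact smul_cancel' Complex.I_ne_zero e
  -- separation lemma: if S (starLie a d) = 0 for all a, then d + d* = 0
  have hSEP : ∀ d : A, (∀ a : A, starLie a d - star (starLie a d) = 0) →
      d + star d = 0 := by
    intro d hd
    have h2 := hd (Complex.I • (1 : A))
    have l : starLie (Complex.I • (1 : A)) d - star (starLie (Complex.I • (1 : A)) d)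
        = Complex.I • (d + star d) + Complex.I • (d + star d) := by
      simp only [starLie, star_smul, Complex.star_def, Complex.conj_I, smul_mul_assoc,
        mul_smul_comm, one_mul, mul_one, star_one, neg_smul, mul_neg, sub_neg_eq_add,
        star_add, star_sub, star_neg, star_star, smul_add]
      abel
    rw [l] at h2
    have h3 : (Complex.I + Complex.I) • (d + star d) = (Complex.I + Complex.I) • (0 : A) := by
      rw [add_smul, smul_zero]
      exact h2
    have hI2 : Complex.I + Complex.I ≠ 0 := by
      simpa [two_smul, smul_eq_mul] using
        mul_ne_zero (two_ne_zero (α := ℂ)) Complex.I_ne_zero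
    exact smul_cancel' hI2 h3
  -- additivity on selfadjoint + skew pairs
  have hADD : ∀ h z : A, star h = h → star z = -z → φ (h + z) = φ h + φ z := by
    intro h z hh hz
    obtain ⟨e, he⟩ := hbij.surjective (φ h + φ z)
    -- S(starLie a z) = 0  (starLie a z is selfadjoint when z is skew)
    have hz0 : ∀ a : A, starLie a z - star (starLie a z) = 0 := by
      intro a
      have hsa' : star (starLie a z) = starLie a z := by
        simp only [starLie, star_sub, star_mul, star_star, hz, neg_mul, mul_neg,
          sub_neg_eq_add]
        abel
      rw [hsa', sub_self]
    -- split identity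
    have hsplit : ∀ a : A, φ (starLie a e - star (starLie a e))
        = φ (starLie a h - star (starLie a h)) := by
      intro a
      have e1 := hT1 a e
      rw [he] at e1
      have expand : starLie (φ a) (φ h + φ z) - star (starLie (φ a) (φ h + φ z))
          = (starLie (φ a) (φ h) - star (starLie (φ a) (φ h)))
            + (starLie (φ a) (φ z) - star (starLie (φ a) (φ z))) := by
        simp only [starLie, mul_add, add_mul, star_sub, star_add, star_mul, star_star]
        abel
      rw [expand, ← hT1 a h, ← hT1 a z, hz0 a, hφ0, add_zero] at e1
      exact e1
    -- σ(a, h+z) = σ(a, h)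
    have hhz : ∀ a : A, starLie a (h + z) - star (starLie a (h + z))
        = starLie a h - star (starLie a h) := by
      intro a
      have l2 : starLie a (h + z) = starLie a h + starLie a z := by
        simp only [starLie, mul_add, add_mul]
        abel
      rw [l2, star_add]
      have l3 : starLie a h + starLie a z - (star (starLie a h) + star (starLie a z))
          = (starLie a h - star (starLie a h)) + (starLie a z - star (starLie a z)) := by
        abel
      rw [l3, hz0 a, add_zero]
    -- injectivity yields σ(a,e) = σ(a,h+z)
    have hinj : ∀ a : A, starLie a e - star (starLie a e)
        = starLie a (h + z) - star (starLie a (h + z)) := by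
      intro a
      apply hbij.injective
      rw [hsplit a, hhz a]
    -- d := e - (h+z) satisfies the SEP hypothesis
    set d := e - (h + z) with hd_def
    have hdS : ∀ a : A, starLie a d - star (starLie a d) = 0 := by
      intro a
      have l1 : starLie a d = starLie a e - starLie a (h + z) := by
        simp only [starLie, hd_def, mul_sub, sub_mul, star_sub]
        abel
      rw [l1, star_sub]
      have l2 : starLie a e - starLie a (h + z)
            - (star (starLie a e) - star (starLie a (h + z)))
          = (starLie a e - star (starLie a e))
            - (starLie a (h + z) - star (starLie a (h + z))) := by
        abel
      rw [l2, hinj a, sub_self]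
    have hdplus : d + star d = 0 := hSEP d hdS
    -- also d - star d = 0, via (F1) applied to e
    have hestar : e - star e = z + z := by
      apply hbij.injective
      rw [hF1 e, he, hdouble, star_add, hsa h hh, hskew z hz]
      abel
    have hdminus : d - star d = 0 := by
      have : star d = star e - (h - z) := by
        rw [hd_def, star_sub, star_add, hh, hz]
        abel
      rw [hd_def, this]
      have l4 : e - (h + z) - (star e - (h - z)) = (e - star e) - (z + z) := by
        abel
      rw [l4, hestar, sub_self]
    have hd0 : d = 0 := by
      have hsum : d + d = 0 := by
        have : (d + star d) + (d - star d) = d + d := by abel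
        rw [← this, hdplus, hdminus, add_zero]
      have h5 : (2 : ℂ) • d = (2 : ℂ) • (0 : A) := by
        rw [two_smul, smul_zero]
        exact hsum
      exact smul_cancel' h2C h5
    have heq : e = h + z := by
      have h6 : e - (h + z) = 0 := hd0
      exact sub_eq_zero.mp h6
    rw [← heq, he]
  -- (KEY) : φ (u + u*) = φ u + (φ u)*
  have hKEY : ∀ u : A, φ (u + star u) = φ u + star (φ u) := by
    intro u
    have hh : star (u + star u) = u + star u := by
      rw [star_add, star_star]; abel
    have hzz : star (u - star u) = -(u - star u) := by
      rw [star_sub, star_star]; abel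
    have e := hADD (u + star u) (u - star u) hh hzz
    have l : (u + star u) + (u - star u) = u + u := by abel
    rw [l, hdouble, hF1 u] at e
    -- e : φ u + φ u = φ (u + star u) + (φ u - star (φ u))
    have l2 : φ (u + star u) = (φ u + φ u) - (φ u - star (φ u)) := by
      rw [e]; abel
    rw [l2]; abel
  -- (STAR) : φ (u*) = (φ u)*
  have hSTAR : ∀ u : A, φ (star u) = star (φ u) := by
    intro u
    have k1 := hKEY u
    have k2 := hKEY (star u)
    rw [star_star] at k2
    -- k2 : φ (star u + u) = φ (star u) + star (φ (star u))
    have k2' : φ (u + star u) = φ (star u) + star (φ (star u)) := by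
      rw [show u + star u = star u + u by abel]
      exact k2
    have f1 := hF1 u
    have f2 := hF1 (star u)
    rw [star_star] at f2
    -- f2 : φ (star u - u) = φ (star u) - star (φ (star u))
    have f2' : φ (star u - u) = -(φ u - star (φ u)) := by
      rw [show star u - u = -(u - star u) by abel, hneg, f1]
    have s1 : φ (star u) + star (φ (star u)) = φ u + star (φ u) := by
      rw [← k2', k1]
    have s2 : φ (star u) - star (φ (star u)) = -(φ u - star (φ u)) := by
      rw [← f2, f2']
    have s3 : φ (star u) + φ (star u) = star (φ u) + star (φ u) := by
      have h12 : (φ (star u) + star (φ (star u))) + (φ (star u) - star (φ (star u)))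
          = (φ u + star (φ u)) + -(φ u - star (φ u)) := by
        rw [s1, s2]
      have lL : (φ (star u) + star (φ (star u))) + (φ (star u) - star (φ (star u)))
          = φ (star u) + φ (star u) := by abel
      have lR : (φ u + star (φ u)) + -(φ u - star (φ u))
          = star (φ u) + star (φ u) := by abel
      rw [lL, lR] at h12
      exact h12
    have h5 : (2 : ℂ) • φ (star u) = (2 : ℂ) • star (φ u) := by
      rw [two_smul, two_smul]
      exact s3
    exact smul_cancel' h2C h5
  -- now the goal
  intro a Pj hPj
  have hp : star Pj = Pj := by
    simp only [Set.mem_insert_iff, Set.mem_singleton_iff] at hPj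
    rcases hPj with rfl | rfl
    · exact hP₁star
    · rw [hP₂, star_sub, star_one, hP₁star]
  -- right multiplicativity for all c
  have hRight : ∀ c : A, φ (c * Pj) = φ c * φ Pj := by
    intro c
    have t2 := hT2 c Pj hp
    have t2' := hT2' c Pj hp
    have hstar_u : star (c * Pj) = Pj * star c := by
      rw [star_mul, hp]
    have f1 := hF1 (c * Pj)
    rw [hstar_u] at f1
    have k := hKEY (c * Pj)
    rw [hstar_u] at k
    have s1 : φ (c * Pj) - star (φ (c * Pj)) = φ c * φ Pj - φ Pj * star (φ c) := by
      rw [← f1, t2]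
    have s2 : φ (c * Pj) + star (φ (c * Pj)) = φ c * φ Pj + φ Pj * star (φ c) := by
      rw [← k, t2']
    have s3 : φ (c * Pj) + φ (c * Pj) = φ c * φ Pj + φ c * φ Pj := by
      have h12 : (φ (c * Pj) - star (φ (c * Pj))) + (φ (c * Pj) + star (φ (c * Pj)))
          = (φ c * φ Pj - φ Pj * star (φ c)) + (φ c * φ Pj + φ Pj * star (φ c)) := by
        rw [s1, s2]
      have lL : (φ (c * Pj) - star (φ (c * Pj))) + (φ (c * Pj) + star (φ (c * Pj)))
          = φ (c * Pj) + φ (c * Pj) := by abel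
      have lR : (φ c * φ Pj - φ Pj * star (φ c)) + (φ c * φ Pj + φ Pj * star (φ c))
          = φ c * φ Pj + φ c * φ Pj := by abel
      rw [lL, lR] at h12
      exact h12
    have h5 : (2 : ℂ) • φ (c * Pj) = (2 : ℂ) • (φ c * φ Pj) := by
      rw [two_smul, two_smul]
      exact s3
    exact smul_cancel' h2C h5
  refine ⟨?_, hRight a⟩
  -- left multiplicativity
  have l : Pj * a = star (star a * Pj) := by
    rw [star_mul, star_star, hp]
  rw [l, hSTAR, hRight (star a), star_mul]
  rw [hsa Pj hp]
  congr 1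
  rw [← hSTAR, star_star]
end

section
/- Let A and A' be unital C*-algebras, P₁ a nontrivial symmetric projection in A, P₂ = I_A − P₁, A_{jk} = P_j A P_k, and suppose A satisfies (♠): for j ∈ {1,2}, P_j A X = {0} implies X = 0. Fix an integer n ≥ 2 and let φ: A → A' be a bijective map with φ(I_A) = I_{A'}, φ(λA) = λφ(A) for all λ ∈ ℂ, satisfying (•): φ(p_{n*}(A,B,Ξ,…,Ξ)) = p_{n*}(φ(A),φ(B),φ(Ξ),…,φ(Ξ)) for all A, B ∈ A and Ξ ∈ {P₁, P₂, I_A}. Write Q_j = φ(P_j) and A'_{jk} = Q_j A' Q_k. Then φ(A_{jk}) ⊆ A'_{jk} for all j, k ∈ {1,2}. -/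
set_option linter.unusedSectionVars false
set_option maxHeartbeats 1000000


section Aux

variable {R : Type*} [Ring R] [StarRing R] [Module ℂ R] [StarModule ℂ R]
  [IsScalarTower ℂ R R] [SMulCommClass ℂ R R]

lemma aux_pow_idem {M : Type*} [Monoid M] (Q : M) (h : Q * Q = Q) :
    ∀ k, Q ^ (k + 1) = Q := by
  intro k
  induction k with
  | zero => simp
  | succ k ih => rw [pow_succ, ih, h]

lemma aux_iterD (Ξ w : R) (c : ℂ) (hc : star c = c) (hw : star w = -w)
    (hcw : w * Ξ + Ξ * w = c • w) :
    ∀ m : ℕ, (fun z => starLie z Ξ)^[m] w = c ^ m • w := by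
  intro m
  induction m with
  | zero => simp
  | succ m ih =>
    rw [Function.iterate_succ_apply', ih]
    show starLie (c ^ m • w) Ξ = c ^ (m + 1) • w
    rw [starLie, star_smul, star_pow, hc, hw, smul_mul_assoc, smul_neg, mul_neg,
      mul_smul_comm, sub_neg_eq_add, ← smul_add, hcw, smul_smul, ← pow_succ]

lemma aux_skewD (Q : R) (hQ : star Q = Q) :
    ∀ (m : ℕ) (w : R), star w = -w →
      (fun z => starLie z Q)^[m] w = (fun z => z * Q + Q * z)^[m] w := by
  intro m
  induction m with
  | zero => intro w _; rfl
  | succ m ih =>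
    intro w hw
    simp only [Function.iterate_succ_apply]
    have h1 : starLie w Q = w * Q + Q * w := by
      rw [starLie, hw, mul_neg, sub_neg_eq_add]
    show (fun z => starLie z Q)^[m] (starLie w Q) = (fun z => z * Q + Q * z)^[m] (w * Q + Q * w)
    rw [h1]
    refine ih _ ?_
    rw [star_add, star_mul, star_mul, hQ, hw, mul_neg, neg_mul]
    abel

lemma aux_hIter_add (Q : R) (m : ℕ) :
    ∀ u v : R, (fun z => z * Q + Q * z)^[m] (u + v)
      = (fun z => z * Q + Q * z)^[m] u + (fun z => z * Q + Q * z)^[m] v := by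
  induction m with
  | zero => intro u v; rfl
  | succ m ih =>
    intro u v
    simp only [Function.iterate_succ_apply]
    rw [show (u + v) * Q + Q * (u + v) = (u * Q + Q * u) + (v * Q + Q * v) by
      rw [add_mul, mul_add]; abel]
    exact ih _ _

lemma aux_hIter_sub (Q : R) (m : ℕ) :
    ∀ u v : R, (fun z => z * Q + Q * z)^[m] (u - v)
      = (fun z => z * Q + Q * z)^[m] u - (fun z => z * Q + Q * z)^[m] v := by
  induction m with
  | zero => intro u v; rfl
  | succ m ih =>
    intro u v
    simp only [Function.iterate_succ_apply]
    rw [show (u - v) * Q + Q * (u - v) = (u * Q + Q * u) - (v * Q + Q * v) by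
      rw [sub_mul, mul_sub]; abel]
    exact ih _ _

lemma aux_hIter_smul (Q : R) (m : ℕ) :
    ∀ (c : ℂ) (v : R), (fun z => z * Q + Q * z)^[m] (c • v)
      = c • (fun z => z * Q + Q * z)^[m] v := by
  induction m with
  | zero => intro c v; rfl
  | succ m ih =>
    intro c v
    simp only [Function.iterate_succ_apply]
    rw [show (c • v) * Q + Q * (c • v) = c • (v * Q + Q * v) by
      rw [smul_mul_assoc, mul_smul_comm, smul_add]]
    exact ih _ _

lemma aux_hIter_right (Q : R) (hQ : Q * Q = Q) :
    ∀ (m : ℕ) (z : R), z * Q = z →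
      (fun z => z * Q + Q * z)^[m] z * Q = (fun z => z * Q + Q * z)^[m] z := by
  intro m
  induction m with
  | zero => intro z hz; exact hz
  | succ m ih =>
    intro z hz
    simp only [Function.iterate_succ_apply]
    apply ih
    calc (z * Q + Q * z) * Q = z * (Q * Q) + Q * (z * Q) := by
          rw [add_mul, mul_assoc, mul_assoc]
      _ = z * Q + Q * z := by rw [hQ, hz]

lemma aux_hIter_left (Q : R) (hQ : Q * Q = Q) :
    ∀ (m : ℕ) (z : R), Q * z = z →
      Q * (fun z => z * Q + Q * z)^[m] z = (fun z => z * Q + Q * z)^[m] z := by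
  intro m
  induction m with
  | zero => intro z hz; exact hz
  | succ m ih =>
    intro z hz
    simp only [Function.iterate_succ_apply]
    apply ih
    calc Q * (z * Q + Q * z) = Q * z * Q + Q * Q * z := by
          rw [mul_add, ← mul_assoc, ← mul_assoc]
      _ = z * Q + Q * z := by rw [hQ, hz]

lemma aux_powD (Q : R) (hQ : star Q = Q) (c : ℂ) (hc : star c = -c) :
    ∀ (m j : ℕ), (fun z => starLie z Q)^[m] (c • Q ^ (j + 1))
      = ((2:ℂ) ^ m * c) • Q ^ (j + 1 + m) := by
  intro m
  induction m with
  | zero => intro j; simp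
  | succ m ih =>
    intro j
    rw [Function.iterate_succ_apply', ih j]
    show starLie (((2:ℂ) ^ m * c) • Q ^ (j + 1 + m)) Q = _
    have hstarcoef : star ((2:ℂ) ^ m * c) = -((2:ℂ) ^ m * c) := by
      rw [star_mul', hc, star_pow]
      simp [mul_comm]
    rw [starLie, star_smul, hstarcoef, star_pow, hQ, smul_mul_assoc, neg_smul, mul_neg,
      mul_smul_comm, sub_neg_eq_add, ← pow_succ, ← pow_succ']
    rw [← smul_add]
    rw [show Q ^ (j + 1 + m + 1) + Q ^ (j + 1 + m + 1) = (2:ℂ) • Q ^ (j + 1 + m + 1) from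
      (two_smul ℂ _).symm]
    rw [smul_smul]
    ring_nf

end Aux

variable {A A' : Type*}
  [NormedRing A] [StarRing A] [CStarRing A] [NormedAlgebra ℂ A]
  [CompleteSpace A] [StarModule ℂ A]
  [NormedRing A'] [StarRing A'] [CStarRing A'] [NormedAlgebra ℂ A']
  [CompleteSpace A'] [StarModule ℂ A']

theorem stmt12
    (P₁ : A) (hP₁proj : P₁ * P₁ = P₁) (hP₁star : star P₁ = P₁)
    (hP₁ne0 : P₁ ≠ 0) (hP₁ne1 : P₁ ≠ 1)
    (P₂ : A) (hP₂ : P₂ = 1 - P₁)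
    (hspade : ∀ Pj ∈ ({P₁, P₂} : Set A), ∀ X : A, (∀ Y : A, Pj * Y * X = 0) → X = 0)
    (n : ℕ) (hn : 2 ≤ n)
    (φ : A → A') (hbij : Function.Bijective φ) (hunit : φ 1 = 1)
    (hsmul : ∀ (c : ℂ) (a : A), φ (c • a) = c • φ a)
    (hbullet : ∀ a b : A, ∀ Ξ ∈ ({P₁, P₂, 1} : Set A),
      φ (pn n a b Ξ) = pn n (φ a) (φ b) (φ Ξ))
    :
    ∀ Pj ∈ ({P₁, P₂} : Set A), ∀ Pk ∈ ({P₁, P₂} : Set A),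
      ∀ a : A, (∃ x : A, a = Pj * x * Pk) → ∃ y : A', φ a = φ Pj * y * φ Pk := by
  -- basic complex number facts
  have hstar2 : star (2:ℂ) = 2 := by norm_num
  have hstar1 : star (1:ℂ) = 1 := star_one ℂ
  have starI : star Complex.I = -Complex.I := by
    rw [Complex.star_def, Complex.conj_I]
  have h2ne : (2:ℂ) ≠ 0 := by norm_num
  have h1ne : (1:ℂ) ≠ 0 := one_ne_zero
  have hstar2I : star (2 * Complex.I) = -(2 * Complex.I) := by
    rw [star_mul', starI, hstar2]; ring
  have h2Ine : (2 * Complex.I) ≠ 0 := mul_ne_zero h2ne Complex.I_ne_zero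
  -- membership facts
  have hmem1 : P₁ ∈ ({P₁, P₂, 1} : Set A) := Set.mem_insert _ _
  have hmem2 : P₂ ∈ ({P₁, P₂, 1} : Set A) := Set.mem_insert_of_mem _ (Set.mem_insert _ _)
  have hmemI : (1:A) ∈ ({P₁, P₂, 1} : Set A) :=
    Set.mem_insert_of_mem _ (Set.mem_insert_of_mem _ rfl)
  -- pn unfolding
  have pnA : ∀ a b ξ : A, pn n a b ξ = (fun z => starLie z ξ)^[n-2] (starLie a b) :=
    fun _ _ _ => rfl
  have pnA' : ∀ a b ξ : A', pn n a b ξ = (fun z => starLie z ξ)^[n-2] (starLie a b) :=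
    fun _ _ _ => rfl
  -- cancellation of nonzero complex scalars in A'
  have cancel : ∀ (c : ℂ), c ≠ 0 → ∀ x y : A', c • x = c • y → x = y := by
    intro c hc x y h
    have h2 := congrArg (fun t => c⁻¹ • t) h
    simpa [smul_smul, inv_mul_cancel₀ hc] using h2
  -- F2a : φ (z - z*) = φ z - (φ z)*
  have F2a : ∀ z : A, φ (z - star z) = φ z - star (φ z) := by
    intro z
    have hb := hbullet z 1 1 hmemI
    have l : pn n z 1 1 = ((2:ℂ) ^ (n-2)) • (z - star z) := by
      have hsl : starLie z (1:A) = z - star z := by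
        show z * 1 - 1 * star z = _; rw [mul_one, one_mul]
      have hsk : star (z - star z) = -(z - star z) := by
        rw [star_sub, star_star, neg_sub]
      have hcw : (z - star z) * 1 + 1 * (z - star z) = (2:ℂ) • (z - star z) := by
        rw [mul_one, one_mul, two_smul]
      rw [pnA, hsl]; exact aux_iterD 1 _ 2 hstar2 hsk hcw (n-2)
    have r : pn n (φ z) (φ 1) (φ 1) = ((2:ℂ) ^ (n-2)) • (φ z - star (φ z)) := by
      rw [hunit]
      have hsl : starLie (φ z) (1:A') = φ z - star (φ z) := by
        show φ z * 1 - 1 * star (φ z) = _; rw [mul_one, one_mul]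
      have hsk : star (φ z - star (φ z)) = -(φ z - star (φ z)) := by
        rw [star_sub, star_star, neg_sub]
      have hcw : (φ z - star (φ z)) * 1 + 1 * (φ z - star (φ z))
          = (2:ℂ) • (φ z - star (φ z)) := by
        rw [mul_one, one_mul, two_smul]
      rw [pnA', hsl]; exact aux_iterD 1 _ 2 hstar2 hsk hcw (n-2)
    rw [l, r, hsmul] at hb
    exact cancel _ (pow_ne_zero _ h2ne) _ _ hb
  -- F2b : φ (z + z*) = φ z + (φ z)*
  have F2b : ∀ z : A, φ (z + star z) = φ z + star (φ z) := by
    intro z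
    have hb := hbullet (Complex.I • z) 1 1 hmemI
    have l : pn n (Complex.I • z) 1 1
        = ((2:ℂ) ^ (n-2)) • (Complex.I • (z + star z)) := by
      have hsl : starLie (Complex.I • z) (1:A) = Complex.I • (z + star z) := by
        show (Complex.I • z) * 1 - 1 * star (Complex.I • z) = _
        rw [mul_one, one_mul, star_smul, starI, neg_smul, sub_neg_eq_add, smul_add]
      have hsk : star (Complex.I • (z + star z)) = -(Complex.I • (z + star z)) := by
        rw [star_smul, starI, star_add, star_star, neg_smul, add_comm]
      have hcw : (Complex.I • (z + star z)) * 1 + 1 * (Complex.I • (z + star z))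
          = (2:ℂ) • (Complex.I • (z + star z)) := by
        rw [mul_one, one_mul, two_smul]
      rw [pnA, hsl]; exact aux_iterD 1 _ 2 hstar2 hsk hcw (n-2)
    have r : pn n (φ (Complex.I • z)) (φ 1) (φ 1)
        = ((2:ℂ) ^ (n-2)) • (Complex.I • (φ z + star (φ z))) := by
      rw [hunit, hsmul]
      have hsl : starLie (Complex.I • φ z) (1:A') = Complex.I • (φ z + star (φ z)) := by
        show (Complex.I • φ z) * 1 - 1 * star (Complex.I • φ z) = _
        rw [mul_one, one_mul, star_smul, starI, neg_smul, sub_neg_eq_add, smul_add]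
      have hsk : star (Complex.I • (φ z + star (φ z)))
          = -(Complex.I • (φ z + star (φ z))) := by
        rw [star_smul, starI, star_add, star_star, neg_smul, add_comm]
      have hcw : (Complex.I • (φ z + star (φ z))) * 1 + 1 * (Complex.I • (φ z + star (φ z)))
          = (2:ℂ) • (Complex.I • (φ z + star (φ z))) := by
        rw [mul_one, one_mul, two_smul]
      rw [pnA', hsl]; exact aux_iterD 1 _ 2 hstar2 hsk hcw (n-2)
    rw [l, r, smul_smul, hsmul, smul_smul] at hb
    exact cancel _ (mul_ne_zero (pow_ne_zero _ h2ne) Complex.I_ne_zero) _ _ hb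
  -- F3 : φ (z*) = (φ z)*
  have F3 : ∀ z : A, φ (star z) = star (φ z) := by
    intro z
    have e1 : φ (z + star z) = φ z + star (φ z) := F2b z
    have e2 : φ (star z + z) = φ (star z) + star (φ (star z)) := by
      have h := F2b (star z); rwa [star_star] at h
    have e3 : φ (star z - z) = φ (star z) - star (φ (star z)) := by
      have h := F2a (star z); rwa [star_star] at h
    have e4 : φ (star z - z) = star (φ z) - φ z := by
      have hneg : φ (-(z - star z)) = -(φ (z - star z)) := by
        have h := hsmul (-1) (z - star z); simpa using h
      rw [show star z - z = -(z - star z) from (neg_sub _ _).symm, hneg, F2a, neg_sub]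
    have eA : φ (star z) + star (φ (star z)) = φ z + star (φ z) := by
      rw [← e2, add_comm (star z) z, e1]
    have eB : φ (star z) - star (φ (star z)) = star (φ z) - φ z := by
      rw [← e3, e4]
    have key : (2:ℂ) • φ (star z) = (2:ℂ) • star (φ z) := by
      calc (2:ℂ) • φ (star z) = φ (star z) + φ (star z) := two_smul _ _
        _ = (φ (star z) + star (φ (star z))) + (φ (star z) - star (φ (star z))) := by abel
        _ = (φ z + star (φ z)) + (star (φ z) - φ z) := by rw [eA, eB]
        _ = star (φ z) + star (φ z) := by abel
        _ = (2:ℂ) • star (φ z) := (two_smul _ _).symm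
    exact cancel _ h2ne _ _ key
  -- Q idempotent
  have projQ : ∀ P : A, P ∈ ({P₁, P₂, 1} : Set A) → star P = P → P * P = P →
      φ P * φ P = φ P := by
    intro P hPmem hPs hPp
    have hQs : star (φ P) = φ P := by rw [← F3, hPs]
    -- seed 1 : A = i•1
    have hb1 := hbullet (Complex.I • (1:A)) P P hPmem
    have l1 : pn n (Complex.I • (1:A)) P P = ((2:ℂ) ^ (n-2) * (2*Complex.I)) • P := by
      have hsl : starLie (Complex.I • (1:A)) P = (2*Complex.I) • P ^ (0+1) := by
        show (Complex.I • (1:A)) * P - P * star (Complex.I • (1:A)) = _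
        rw [star_smul, starI, star_one, smul_mul_assoc, one_mul, neg_smul, mul_neg,
          mul_smul_comm, mul_one, sub_neg_eq_add, pow_one, two_mul, add_smul]
      rw [pnA, hsl, aux_powD P hPs (2*Complex.I) hstar2I (n-2) 0,
        show 0+1+(n-2) = (n-2)+1 from by omega, aux_pow_idem P hPp (n-2)]
    have r1 : pn n (φ (Complex.I • (1:A))) (φ P) (φ P)
        = ((2:ℂ) ^ (n-2) * (2*Complex.I)) • (φ P) ^ ((n-2)+1) := by
      rw [hsmul, hunit]
      have hsl : starLie (Complex.I • (1:A')) (φ P) = (2*Complex.I) • (φ P) ^ (0+1) := by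
        show (Complex.I • (1:A')) * φ P - φ P * star (Complex.I • (1:A')) = _
        rw [star_smul, starI, star_one, smul_mul_assoc, one_mul, neg_smul, mul_neg,
          mul_smul_comm, mul_one, sub_neg_eq_add, pow_one, two_mul, add_smul]
      rw [pnA', hsl, aux_powD (φ P) hQs (2*Complex.I) hstar2I (n-2) 0,
        show 0+1+(n-2) = (n-2)+1 from by omega]
    rw [l1, r1, hsmul] at hb1
    have hQ1 : φ P = (φ P) ^ ((n-2)+1) :=
      cancel _ (mul_ne_zero (pow_ne_zero _ h2ne) h2Ine) _ _ hb1
    -- seed 2 : A = i•P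
    have hb2 := hbullet (Complex.I • P) P P hPmem
    have l2 : pn n (Complex.I • P) P P = ((2:ℂ) ^ (n-2) * (2*Complex.I)) • P := by
      have hsl : starLie (Complex.I • P) P = (2*Complex.I) • P ^ (0+1) := by
        show (Complex.I • P) * P - P * star (Complex.I • P) = _
        rw [star_smul, starI, hPs, smul_mul_assoc, neg_smul, mul_neg,
          mul_smul_comm, sub_neg_eq_add, hPp, pow_one, two_mul, add_smul]
      rw [pnA, hsl, aux_powD P hPs (2*Complex.I) hstar2I (n-2) 0,
        show 0+1+(n-2) = (n-2)+1 from by omega, aux_pow_idem P hPp (n-2)]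
    have r2 : pn n (φ (Complex.I • P)) (φ P) (φ P)
        = ((2:ℂ) ^ (n-2) * (2*Complex.I)) • (φ P) ^ ((n-2)+1+1) := by
      rw [hsmul]
      have hsl : starLie (Complex.I • φ P) (φ P) = (2*Complex.I) • (φ P) ^ (1+1) := by
        show (Complex.I • φ P) * φ P - φ P * star (Complex.I • φ P) = _
        rw [star_smul, starI, hQs, smul_mul_assoc, neg_smul, mul_neg,
          mul_smul_comm, sub_neg_eq_add]
        rw [show (φ P) ^ (1+1) = φ P * φ P from by rw [pow_succ, pow_one], two_mul, add_smul]
      rw [pnA', hsl, aux_powD (φ P) hQs (2*Complex.I) hstar2I (n-2) 1,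
        show 1+1+(n-2) = (n-2)+1+1 from by omega]
    rw [l2, r2, hsmul] at hb2
    have hQ2 : φ P = (φ P) ^ ((n-2)+1+1) :=
      cancel _ (mul_ne_zero (pow_ne_zero _ h2ne) h2Ine) _ _ hb2
    have h3 : (φ P) ^ ((n-2)+1+1) = φ P * φ P := by
      rw [pow_succ, ← hQ1]
    rw [← h3, ← hQ2]
  -- right absorption
  have right_abs : ∀ q : A, q ∈ ({P₁, P₂, 1} : Set A) → star q = q → q * q = q →
      ∀ c : ℂ, star c = c → c ≠ 0 → ∀ a : A, a * q = a → q * star a = star a →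
      ((a - star a) * q + q * (a - star a) = c • (a - star a)) →
      ((a + star a) * q + q * (a + star a) = c • (a + star a)) →
      φ a * φ q = φ a := by
    intro q hqmem hqs hqq c hcs hc0 a haq hqsa hE1 hE2
    have hQs : star (φ q) = φ q := by rw [← F3, hqs]
    have hQQ : φ q * φ q = φ q := projQ q hqmem hqs hqq
    have hskew1 : star (a - star a) = -(a - star a) := by
      rw [star_sub, star_star, neg_sub]
    have hskew2 : star (Complex.I • (a + star a)) = -(Complex.I • (a + star a)) := by
      rw [star_smul, starI, star_add, star_star, neg_smul, add_comm]
    have hE2' : (Complex.I • (a + star a)) * q + q * (Complex.I • (a + star a))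
        = c • (Complex.I • (a + star a)) := by
      rw [smul_mul_assoc, mul_smul_comm, ← smul_add, hE2, smul_comm]
    -- identity 1
    have hb1 := hbullet a q q hqmem
    have l1 : pn n a q q = c ^ (n-2) • (a - star a) := by
      have hsl : starLie a q = a - star a := by
        show a * q - q * star a = _; rw [haq, hqsa]
      rw [pnA, hsl]; exact aux_iterD q _ c hcs hskew1 hE1 (n-2)
    have r1 : pn n (φ a) (φ q) (φ q)
        = (fun z => z * φ q + φ q * z)^[n-2] (φ a * φ q - φ q * star (φ a)) := by
      have hsl : starLie (φ a) (φ q) = φ a * φ q - φ q * star (φ a) := rfl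
      have hsk : star (φ a * φ q - φ q * star (φ a))
          = -(φ a * φ q - φ q * star (φ a)) := by
        rw [star_sub, star_mul, star_mul, star_star, hQs, neg_sub]
      rw [pnA', hsl]; exact aux_skewD (φ q) hQs (n-2) _ hsk
    rw [l1, r1, hsmul, F2a] at hb1
    -- identity 2
    have hb2 := hbullet (Complex.I • a) q q hqmem
    have l2 : pn n (Complex.I • a) q q = c ^ (n-2) • (Complex.I • (a + star a)) := by
      have hsl : starLie (Complex.I • a) q = Complex.I • (a + star a) := by
        show (Complex.I • a) * q - q * star (Complex.I • a) = _
        rw [star_smul, starI, smul_mul_assoc, haq, neg_smul, mul_neg, mul_smul_comm,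
          hqsa, sub_neg_eq_add, smul_add]
      rw [pnA, hsl]; exact aux_iterD q _ c hcs hskew2 hE2' (n-2)
    have r2 : pn n (φ (Complex.I • a)) (φ q) (φ q)
        = Complex.I • (fun z => z * φ q + φ q * z)^[n-2] (φ a * φ q + φ q * star (φ a)) := by
      rw [hsmul]
      have hsl : starLie (Complex.I • φ a) (φ q)
          = Complex.I • (φ a * φ q + φ q * star (φ a)) := by
        show (Complex.I • φ a) * φ q - φ q * star (Complex.I • φ a) = _
        rw [star_smul, starI, smul_mul_assoc, neg_smul, mul_neg, mul_smul_comm,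
          sub_neg_eq_add, smul_add]
      have hsk : star (Complex.I • (φ a * φ q + φ q * star (φ a)))
          = -(Complex.I • (φ a * φ q + φ q * star (φ a))) := by
        rw [star_smul, starI, star_add, star_mul, star_mul, star_star, hQs,
          neg_smul, add_comm]
      rw [pnA', hsl, aux_skewD (φ q) hQs (n-2) _ hsk, aux_hIter_smul]
    rw [l2, r2, smul_smul, hsmul, F2b] at hb2
    have hb2' : c ^ (n-2) • (φ a + star (φ a))
        = (fun z => z * φ q + φ q * z)^[n-2] (φ a * φ q + φ q * star (φ a)) := by
      refine cancel Complex.I Complex.I_ne_zero _ _ ?_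
      rw [smul_smul, mul_comm]
      exact hb2
    -- combine
    have hsum : c ^ (n-2) • (φ a + φ a)
        = (fun z => z * φ q + φ q * z)^[n-2] (φ a * φ q + φ a * φ q) := by
      have h := congrArg₂ (· + ·) hb1 hb2'
      rw [← smul_add, ← aux_hIter_add,
        show (φ a - star (φ a)) + (φ a + star (φ a)) = φ a + φ a from by abel,
        show (φ a * φ q - φ q * star (φ a)) + (φ a * φ q + φ q * star (φ a))
          = φ a * φ q + φ a * φ q from by abel] at h
      exact h
    have hkey : c ^ (n-2) • φ a = (fun z => z * φ q + φ q * z)^[n-2] (φ a * φ q) := by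
      refine cancel 2 h2ne _ _ ?_
      calc (2:ℂ) • (c ^ (n-2) • φ a) = c ^ (n-2) • ((2:ℂ) • φ a) := smul_comm _ _ _
        _ = c ^ (n-2) • (φ a + φ a) := by rw [two_smul]
        _ = (fun z => z * φ q + φ q * z)^[n-2] (φ a * φ q + φ a * φ q) := hsum
        _ = (fun z => z * φ q + φ q * z)^[n-2] ((2:ℂ) • (φ a * φ q)) := by rw [two_smul]
        _ = (2:ℂ) • (fun z => z * φ q + φ q * z)^[n-2] (φ a * φ q) := aux_hIter_smul _ _ _ _
    have habs : (fun z => z * φ q + φ q * z)^[n-2] (φ a * φ q) * φ q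
        = (fun z => z * φ q + φ q * z)^[n-2] (φ a * φ q) :=
      aux_hIter_right (φ q) hQQ (n-2) _ (by rw [mul_assoc, hQQ])
    have hfin : c ^ (n-2) • (φ a * φ q) = c ^ (n-2) • φ a := by
      calc c ^ (n-2) • (φ a * φ q) = (c ^ (n-2) • φ a) * φ q := (smul_mul_assoc _ _ _).symm
        _ = (fun z => z * φ q + φ q * z)^[n-2] (φ a * φ q) * φ q := by rw [hkey]
        _ = (fun z => z * φ q + φ q * z)^[n-2] (φ a * φ q) := habs
        _ = c ^ (n-2) • φ a := hkey.symm
    exact cancel _ (pow_ne_zero _ hc0) _ _ hfin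
  -- left absorption
  have left_abs : ∀ p : A, p ∈ ({P₁, P₂, 1} : Set A) → star p = p → p * p = p →
      ∀ c : ℂ, star c = c → c ≠ 0 → ∀ a : A, star a * p = star a → p * a = a →
      ((star a - a) * p + p * (star a - a) = c • (star a - a)) →
      ((star a + a) * p + p * (star a + a) = c • (star a + a)) →
      φ p * φ a = φ a := by
    intro p hpmem hps hpp c hcs hc0 a hsap hpa hE3 hE4
    have hQs : star (φ p) = φ p := by rw [← F3, hps]
    have hQQ : φ p * φ p = φ p := projQ p hpmem hps hpp
    have hskew1 : star (star a - a) = -(star a - a) := by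
      rw [star_sub, star_star, neg_sub]
    have hskew2 : star (Complex.I • (star a + a)) = -(Complex.I • (star a + a)) := by
      rw [star_smul, starI, star_add, star_star, neg_smul, add_comm]
    have hE4' : (Complex.I • (star a + a)) * p + p * (Complex.I • (star a + a))
        = c • (Complex.I • (star a + a)) := by
      rw [smul_mul_assoc, mul_smul_comm, ← smul_add, hE4, smul_comm]
    -- identity 1
    have hb1 := hbullet (star a) p p hpmem
    have l1 : pn n (star a) p p = c ^ (n-2) • (star a - a) := by
      have hsl : starLie (star a) p = star a - a := by
        show star a * p - p * star (star a) = _; rw [hsap, star_star, hpa]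
      rw [pnA, hsl]; exact aux_iterD p _ c hcs hskew1 hE3 (n-2)
    have r1 : pn n (φ (star a)) (φ p) (φ p)
        = (fun z => z * φ p + φ p * z)^[n-2] (star (φ a) * φ p - φ p * φ a) := by
      rw [F3]
      have hsl : starLie (star (φ a)) (φ p) = star (φ a) * φ p - φ p * φ a := by
        show star (φ a) * φ p - φ p * star (star (φ a)) = _; rw [star_star]
      have hsk : star (star (φ a) * φ p - φ p * φ a)
          = -(star (φ a) * φ p - φ p * φ a) := by
        rw [star_sub, star_mul, star_mul, star_star, hQs, neg_sub]
      rw [pnA', hsl]; exact aux_skewD (φ p) hQs (n-2) _ hsk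
    have lphi1 : φ (c ^ (n-2) • (star a - a)) = c ^ (n-2) • (star (φ a) - φ a) := by
      rw [hsmul]
      have h := F2a (star a); rw [star_star] at h
      rw [h, F3, star_star]
    rw [l1, r1, lphi1] at hb1
    -- identity 2
    have hb2 := hbullet (Complex.I • star a) p p hpmem
    have l2 : pn n (Complex.I • star a) p p = c ^ (n-2) • (Complex.I • (star a + a)) := by
      have hsl : starLie (Complex.I • star a) p = Complex.I • (star a + a) := by
        show (Complex.I • star a) * p - p * star (Complex.I • star a) = _
        rw [star_smul, starI, star_star, smul_mul_assoc, hsap, neg_smul, mul_neg,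
          mul_smul_comm, hpa, sub_neg_eq_add, smul_add]
      rw [pnA, hsl]; exact aux_iterD p _ c hcs hskew2 hE4' (n-2)
    have r2 : pn n (φ (Complex.I • star a)) (φ p) (φ p)
        = Complex.I • (fun z => z * φ p + φ p * z)^[n-2] (star (φ a) * φ p + φ p * φ a) := by
      rw [hsmul, F3]
      have hsl : starLie (Complex.I • star (φ a)) (φ p)
          = Complex.I • (star (φ a) * φ p + φ p * φ a) := by
        show (Complex.I • star (φ a)) * φ p - φ p * star (Complex.I • star (φ a)) = _
        rw [star_smul, starI, star_star, smul_mul_assoc, neg_smul, mul_neg,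
          mul_smul_comm, sub_neg_eq_add, smul_add]
      have hsk : star (Complex.I • (star (φ a) * φ p + φ p * φ a))
          = -(Complex.I • (star (φ a) * φ p + φ p * φ a)) := by
        rw [star_smul, starI, star_add, star_mul, star_mul, star_star, hQs,
          neg_smul, add_comm]
      rw [pnA', hsl, aux_skewD (φ p) hQs (n-2) _ hsk, aux_hIter_smul]
    have lphi2 : φ (c ^ (n-2) • (Complex.I • (star a + a)))
        = (c ^ (n-2) * Complex.I) • (star (φ a) + φ a) := by
      rw [smul_smul, hsmul]
      have h := F2b (star a); rw [star_star] at h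
      rw [h, F3, star_star]
    rw [l2, r2, lphi2] at hb2
    have hb2' : c ^ (n-2) • (star (φ a) + φ a)
        = (fun z => z * φ p + φ p * z)^[n-2] (star (φ a) * φ p + φ p * φ a) := by
      refine cancel Complex.I Complex.I_ne_zero _ _ ?_
      rw [smul_smul, mul_comm]
      exact hb2
    -- combine : e2 - e1
    have hsum : c ^ (n-2) • (φ a + φ a)
        = (fun z => z * φ p + φ p * z)^[n-2] (φ p * φ a + φ p * φ a) := by
      have h := congrArg₂ (· - ·) hb2' hb1
      rw [← smul_sub, ← aux_hIter_sub,
        show (star (φ a) + φ a) - (star (φ a) - φ a) = φ a + φ a from by abel,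
        show (star (φ a) * φ p + φ p * φ a) - (star (φ a) * φ p - φ p * φ a)
          = φ p * φ a + φ p * φ a from by abel] at h
      exact h
    have hkey : c ^ (n-2) • φ a = (fun z => z * φ p + φ p * z)^[n-2] (φ p * φ a) := by
      refine cancel 2 h2ne _ _ ?_
      calc (2:ℂ) • (c ^ (n-2) • φ a) = c ^ (n-2) • ((2:ℂ) • φ a) := smul_comm _ _ _
        _ = c ^ (n-2) • (φ a + φ a) := by rw [two_smul]
        _ = (fun z => z * φ p + φ p * z)^[n-2] (φ p * φ a + φ p * φ a) := hsum
        _ = (fun z => z * φ p + φ p * z)^[n-2] ((2:ℂ) • (φ p * φ a)) := by rw [two_smul]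
        _ = (2:ℂ) • (fun z => z * φ p + φ p * z)^[n-2] (φ p * φ a) := aux_hIter_smul _ _ _ _
    have habs : φ p * (fun z => z * φ p + φ p * z)^[n-2] (φ p * φ a)
        = (fun z => z * φ p + φ p * z)^[n-2] (φ p * φ a) :=
      aux_hIter_left (φ p) hQQ (n-2) _ (by rw [← mul_assoc, hQQ])
    have hfin : c ^ (n-2) • (φ p * φ a) = c ^ (n-2) • φ a := by
      calc c ^ (n-2) • (φ p * φ a) = φ p * (c ^ (n-2) • φ a) := (mul_smul_comm _ _ _).symm
        _ = φ p * (fun z => z * φ p + φ p * z)^[n-2] (φ p * φ a) := by rw [hkey]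
        _ = (fun z => z * φ p + φ p * z)^[n-2] (φ p * φ a) := habs
        _ = c ^ (n-2) • φ a := hkey.symm
    exact cancel _ (pow_ne_zero _ hc0) _ _ hfin
  -- projection facts for P₂
  have hP₂star : star P₂ = P₂ := by rw [hP₂, star_sub, star_one, hP₁star]
  have hP₂proj : P₂ * P₂ = P₂ := by
    rw [hP₂, sub_mul, one_mul, mul_sub, mul_one, hP₁proj]
    abel
  have h12 : P₁ * P₂ = 0 := by rw [hP₂, mul_sub, mul_one, hP₁proj, sub_self]
  have h21 : P₂ * P₁ = 0 := by rw [hP₂, sub_mul, one_mul, hP₁proj, sub_self]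
  -- diagonal corner
  have corner_diag : ∀ p : A, p ∈ ({P₁, P₂, 1} : Set A) → star p = p → p * p = p →
      ∀ x : A, φ (p * x * p) = φ p * φ (p * x * p) * φ p := by
    intro p hpmem hps hpp x
    set a := p * x * p with ha
    have hsa : star a = p * (star x * p) := by
      rw [ha, star_mul, star_mul, hps]
    have haq : a * p = a := by rw [ha, mul_assoc, hpp]
    have hqsa : p * star a = star a := by rw [hsa, ← mul_assoc, hpp]
    have hsap : star a * p = star a := by rw [hsa, mul_assoc, mul_assoc, hpp]
    have hpa : p * a = a := by rw [ha, ← mul_assoc, ← mul_assoc, hpp]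
    have hE1 : (a - star a) * p + p * (a - star a) = (2:ℂ) • (a - star a) := by
      rw [sub_mul, mul_sub, haq, hsap, hpa, hqsa, two_smul]
    have hE2 : (a + star a) * p + p * (a + star a) = (2:ℂ) • (a + star a) := by
      rw [add_mul, mul_add, haq, hsap, hpa, hqsa, two_smul]
    have hE3 : (star a - a) * p + p * (star a - a) = (2:ℂ) • (star a - a) := by
      rw [sub_mul, mul_sub, haq, hsap, hpa, hqsa, two_smul]
    have hE4 : (star a + a) * p + p * (star a + a) = (2:ℂ) • (star a + a) := by
      rw [add_mul, mul_add, haq, hsap, hpa, hqsa, two_smul]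
    have hr : φ a * φ p = φ a := right_abs p hpmem hps hpp 2 hstar2 h2ne a haq hqsa hE1 hE2
    have hl : φ p * φ a = φ a := left_abs p hpmem hps hpp 2 hstar2 h2ne a hsap hpa hE3 hE4
    rw [hl, hr]
  -- off-diagonal corner
  have corner_off : ∀ p q : A, p ∈ ({P₁, P₂, 1} : Set A) → q ∈ ({P₁, P₂, 1} : Set A) →
      star p = p → star q = q → p * p = p → q * q = q → p * q = 0 → q * p = 0 →
      ∀ x : A, φ (p * x * q) = φ p * φ (p * x * q) * φ q := by
    intro p q hpmem hqmem hps hqs hpp hqq hpq hqp x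
    set a := p * x * q with ha
    have hsa : star a = q * (star x * p) := by
      rw [ha, star_mul, star_mul, hps, hqs]
    have haq : a * q = a := by rw [ha, mul_assoc, hqq]
    have hqsa : q * star a = star a := by rw [hsa, ← mul_assoc, hqq]
    have hsap : star a * p = star a := by rw [hsa, mul_assoc, mul_assoc, hpp]
    have hpa : p * a = a := by rw [ha, ← mul_assoc, ← mul_assoc, hpp]
    have hsaq : star a * q = 0 := by
      rw [hsa, mul_assoc, mul_assoc, hpq, mul_zero, mul_zero]
    have hqa : q * a = 0 := by
      rw [ha, ← mul_assoc, ← mul_assoc, hqp, zero_mul, zero_mul]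
    have hap : a * p = 0 := by rw [ha, mul_assoc, hqp, mul_zero]
    have hpsa : p * star a = 0 := by rw [hsa, ← mul_assoc, hpq, zero_mul]
    have hE1 : (a - star a) * q + q * (a - star a) = (1:ℂ) • (a - star a) := by
      rw [sub_mul, mul_sub, haq, hsaq, hqa, hqsa, one_smul]
      abel
    have hE2 : (a + star a) * q + q * (a + star a) = (1:ℂ) • (a + star a) := by
      rw [add_mul, mul_add, haq, hsaq, hqa, hqsa, one_smul]
      abel
    have hE3 : (star a - a) * p + p * (star a - a) = (1:ℂ) • (star a - a) := by
      rw [sub_mul, mul_sub, hsap, hap, hpsa, hpa, one_smul]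
      abel
    have hE4 : (star a + a) * p + p * (star a + a) = (1:ℂ) • (star a + a) := by
      rw [add_mul, mul_add, hsap, hap, hpsa, hpa, one_smul]
      abel
    have hr : φ a * φ q = φ a := right_abs q hqmem hqs hqq 1 hstar1 h1ne a haq hqsa hE1 hE2
    have hl : φ p * φ a = φ a := left_abs p hpmem hps hpp 1 hstar1 h1ne a hsap hpa hE3 hE4
    rw [hl, hr]
  -- main case analysis
  intro Pj hPj Pk hPk a hax
  obtain ⟨x, rfl⟩ := hax
  simp only [Set.mem_insert_iff, Set.mem_singleton_iff] at hPj hPk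
  rcases hPj with hj | hj <;> rcases hPk with hk | hk <;> rw [hj, hk]
  · exact ⟨φ (P₁ * x * P₁), corner_diag P₁ hmem1 hP₁star hP₁proj x⟩
  · exact ⟨φ (P₁ * x * P₂), corner_off P₁ P₂ hmem1 hmem2 hP₁star hP₂star hP₁proj hP₂proj h12 h21 x⟩
  · exact ⟨φ (P₂ * x * P₁), corner_off P₂ P₁ hmem2 hmem1 hP₂star hP₁star hP₂proj hP₁proj h21 h12 x⟩
  · exact ⟨φ (P₂ * x * P₂), corner_diag P₂ hmem2 hP₂star hP₂proj x⟩
end
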